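/- arXiv:1406.6246 — 7 statements merged into one kernel-verified Lean document; each statement's English description precedes it below -/
import Mathlib

section
/- Let A be an integral domain of characteristic zero and B a locally nilpotent derivation of A. Then the kernel of B is factorially closed: if f, g ∈ A are nonzero and fg ∈ ker B, then f ∈ ker B and g ∈ ker B. -/
open Finset in
lemma iter_leibniz_aux {A : Type*} [CommRing A] (B : Derivation ℤ A A) (f g : A) (n : ℕ) :
    (⇑B)^[n] (f * g) =
      ∑ i ∈ range (n + 1), n.choose i • ((⇑B)^[i] f * (⇑B)^[n - i] g) := by
  induction n with
  | zero => simp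
  | succ n ih =>
    rw [Function.iterate_succ_apply', ih, map_sum]
    have h1 : ∀ i ∈ range (n + 1),
        B (n.choose i • ((⇑B)^[i] f * (⇑B)^[n - i] g)) =
        n.choose i • ((⇑B)^[i + 1] f * (⇑B)^[n - i] g) +
        n.choose i • ((⇑B)^[i] f * (⇑B)^[n - i + 1] g) := by
      intro i _
      rw [map_nsmul, Derivation.leibniz, ← smul_add]
      rw [Function.iterate_succ_apply', Function.iterate_succ_apply']
      simp only [smul_eq_mul, nsmul_eq_mul]
      ring
    rw [Finset.sum_congr rfl h1, Finset.sum_add_distrib]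
    have h2 : ∀ i ∈ range (n + 1),
        n.choose i • ((⇑B)^[i] f * (⇑B)^[n - i + 1] g) =
        n.choose i • ((⇑B)^[i] f * (⇑B)^[n + 1 - i] g) := by
      intro i hi; rw [mem_range] at hi
      have : n - i + 1 = n + 1 - i := by omega
      rw [this]
    rw [Finset.sum_congr rfl h2]
    have key : ∑ i ∈ range (n + 2), (n + 1).choose i • ((⇑B)^[i] f * (⇑B)^[n + 1 - i] g)
        = (∑ i ∈ range (n + 1), n.choose i • ((⇑B)^[i + 1] f * (⇑B)^[n - i] g))
        + ∑ i ∈ range (n + 1), n.choose i • ((⇑B)^[i] f * (⇑B)^[n + 1 - i] g) := by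
      rw [Finset.sum_range_succ'
        (fun i => (n + 1).choose i • ((⇑B)^[i] f * (⇑B)^[n + 1 - i] g)) (n + 1)]
      simp only [Nat.choose_succ_succ, add_smul]
      rw [Finset.sum_add_distrib]
      have e1 : ∀ i ∈ range (n + 1),
          n.choose i • ((⇑B)^[i + 1] f * (⇑B)^[n + 1 - (i + 1)] g) =
          n.choose i • ((⇑B)^[i + 1] f * (⇑B)^[n - i] g) := by
        intro i hi
        have : n + 1 - (i + 1) = n - i := by omega
        rw [this]
      rw [Finset.sum_congr rfl e1]
      have e2 : (∑ i ∈ range (n + 1),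
            n.choose (i + 1) • ((⇑B)^[i + 1] f * (⇑B)^[n + 1 - (i + 1)] g))
          + (n + 1).choose 0 • ((⇑B)^[0] f * (⇑B)^[n + 1 - 0] g)
          = ∑ i ∈ range (n + 1), n.choose i • ((⇑B)^[i] f * (⇑B)^[n + 1 - i] g) := by
        rw [show ((n + 1).choose 0 • ((⇑B)^[0] f * (⇑B)^[n + 1 - 0] g))
            = n.choose 0 • ((⇑B)^[0] f * (⇑B)^[n + 1 - 0] g) by simp,
          ← Finset.sum_range_succ'
          (fun i => n.choose i • ((⇑B)^[i] f * (⇑B)^[n + 1 - i] g)) (n + 1),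
          Finset.sum_range_succ]
        simp
      rw [add_assoc, e2]
    rw [key]

/-- The kernel of a locally nilpotent derivation of an integral domain of
characteristic zero is factorially closed. -/
theorem ker_factoriallyClosed_of_locallyNilpotent {A : Type*} [CommRing A] [IsDomain A]
    [CharZero A] (B : Derivation ℤ A A) (hB : ∀ a : A, ∃ n : ℕ, (⇑B)^[n] a = 0)
    (f g : A) (hf : f ≠ 0) (hg : g ≠ 0) (hfg : B (f * g) = 0) :
    B f = 0 ∧ B g = 0 := by
  classical
  -- once an iterate vanishes, all later iterates vanish
  have zero_of : ∀ (x : A) (k l : ℕ), (⇑B)^[k] x = 0 → (⇑B)^[k + l] x = 0 := by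
    intro x k l h
    rw [add_comm, Function.iterate_add_apply, h]
    exact Function.iterate_fixed (map_zero B) l
  have zero_of' : ∀ (x : A) (k l : ℕ), k ≤ l → (⇑B)^[k] x = 0 → (⇑B)^[l] x = 0 := by
    intro x k l hkl h
    have := zero_of x k (l - k) h
    rwa [Nat.add_sub_cancel' hkl] at this
  -- maximal nonvanishing iterate
  have exists_max : ∀ x : A, x ≠ 0 → ∃ m : ℕ, (⇑B)^[m] x ≠ 0 ∧ (⇑B)^[m + 1] x = 0 := by
    intro x hx
    obtain ⟨N, hN⟩ := hB x
    have hex : ∃ k : ℕ, (⇑B)^[k + 1] x = 0 := ⟨N, zero_of' x N (N + 1) (by omega) hN⟩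
    refine ⟨Nat.find hex, ?_, Nat.find_spec hex⟩
    rcases Nat.eq_zero_or_eq_succ_pred (Nat.find hex) with h0 | hsucc
    · rw [h0]; simpa using hx
    · rw [hsucc]
      exact Nat.find_min hex (by omega)
  obtain ⟨m, hm, hm1⟩ := exists_max f hf
  obtain ⟨n, hn, hn1⟩ := exists_max g hg
  -- the binomial formula collapses to a single nonzero term
  have hsum : (⇑B)^[m + n] (f * g) = (m + n).choose m • ((⇑B)^[m] f * (⇑B)^[n] g) := by
    rw [iter_leibniz_aux]
    have h0 : ∀ i ∈ Finset.range (m + n + 1), i ≠ m →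
        (m + n).choose i • ((⇑B)^[i] f * (⇑B)^[m + n - i] g) = 0 := by
      intro i hi hne
      rw [Finset.mem_range] at hi
      rcases lt_or_gt_of_ne hne with hlt | hgt
      · have : (⇑B)^[m + n - i] g = 0 := zero_of' g (n + 1) (m + n - i) (by omega) hn1
        rw [this, mul_zero, smul_zero]
      · have : (⇑B)^[i] f = 0 := zero_of' f (m + 1) i (by omega) hm1
        rw [this, zero_mul, smul_zero]
    rw [Finset.sum_eq_single_of_mem m (Finset.mem_range.mpr (by omega)) h0]
    have : m + n - m = n := by omega
    rw [this]
  have hprod : (⇑B)^[m + n] (f * g) ≠ 0 := by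
    rw [hsum, nsmul_eq_mul]
    exact mul_ne_zero (Nat.cast_ne_zero.mpr (Nat.choose_pos (Nat.le_add_right m n)).ne')
      (mul_ne_zero hm hn)
  have hmn : m + n = 0 := by
    by_contra h
    obtain ⟨k, hk⟩ := Nat.exists_eq_succ_of_ne_zero h
    apply hprod
    rw [hk, Function.iterate_succ_apply, hfg]
    exact Function.iterate_fixed (map_zero B) k
  have hm0 : m = 0 := by omega
  have hn0 : n = 0 := by omega
  constructor
  · have := hm1; rw [hm0] at this; simpa using this
  · have := hn1; rw [hn0] at this; simpa using this
end

section
/- Let A be an integral domain of characteristic zero, B a locally nilpotent derivation of A, and f ∈ A. Then the derivation fB (defined by (fB)(a) = f·B(a)) is locally nilpotent if and only if B(f) = 0. -/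
section Aux

variable {A : Type*} [CommRing A] (B : Derivation ℤ A A)

lemma iter_zero (k : ℕ) : (⇑B)^[k] 0 = 0 :=
  Function.iterate_fixed (map_zero B) k

lemma iter_add (k : ℕ) (x y : A) : (⇑B)^[k] (x + y) = (⇑B)^[k] x + (⇑B)^[k] y := by
  induction k generalizing x y with
  | zero => simp
  | succ k ih => rw [Function.iterate_succ_apply, Function.iterate_succ_apply,
      Function.iterate_succ_apply, map_add, ih]

lemma iter_mono {a : A} {n : ℕ} (h : (⇑B)^[n] a = 0) (j : ℕ) (hj : n ≤ j) :
    (⇑B)^[j] a = 0 := by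
  obtain ⟨t, rfl⟩ := Nat.exists_eq_add_of_le hj
  rw [Nat.add_comm, Function.iterate_add_apply, h, iter_zero]

lemma iter_vanish : ∀ k m n (a b : A), m + n = k →
    (⇑B)^[m+1] a = 0 → (⇑B)^[n+1] b = 0 → (⇑B)^[m+n+1] (a * b) = 0 := by
  intro k
  induction k with
  | zero =>
    intro m n a b hmn ha hb
    obtain ⟨rfl, rfl⟩ : m = 0 ∧ n = 0 := by omega
    have ha' : B a = 0 := by simpa using ha
    have hb' : B b = 0 := by simpa using hb
    show B (a * b) = 0
    rw [Derivation.leibniz, smul_eq_mul, smul_eq_mul, ha', hb', mul_zero, mul_zero, add_zero]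
  | succ k ih =>
    intro m n a b hmn ha hb
    have h1 : (⇑B)^[m+n+1] (a * b) = (⇑B)^[m+n] (B (a * b)) := by
      rw [Function.iterate_succ_apply]
    rw [h1, Derivation.leibniz, smul_eq_mul, smul_eq_mul, iter_add]
    have t1 : (⇑B)^[m+n] (a * B b) = 0 := by
      rcases Nat.eq_zero_or_pos n with hn | hn
      · subst hn
        have : B b = 0 := by simpa using hb
        rw [this, mul_zero, iter_zero]
      · have hb' : (⇑B)^[(n-1)+1] (B b) = 0 := by
          have : (⇑B)^[(n-1)+1] (B b) = (⇑B)^[n+1] b := by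
            rw [← Function.iterate_succ_apply]
            congr 1
            omega
          rw [this, hb]
        have := ih m (n-1) a (B b) (by omega) ha hb'
        have he : m + (n-1) + 1 = m + n := by omega
        rwa [he] at this
    have t2 : (⇑B)^[m+n] (b * B a) = 0 := by
      rcases Nat.eq_zero_or_pos m with hm | hm
      · subst hm
        have : B a = 0 := by simpa using ha
        rw [this, mul_zero, iter_zero]
      · have ha' : (⇑B)^[(m-1)+1] (B a) = 0 := by
          have : (⇑B)^[(m-1)+1] (B a) = (⇑B)^[m+1] a := by
            rw [← Function.iterate_succ_apply]
            congr 1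
            omega
          rw [this, ha]
        have := ih n (m-1) b (B a) (by omega) hb ha'
        have he : n + (m-1) + 1 = m + n := by omega
        rwa [he] at this
    rw [t1, t2, add_zero]

lemma iter_lead : ∀ k m n (a b : A), m + n = k →
    (⇑B)^[m+1] a = 0 → (⇑B)^[n+1] b = 0 →
    (⇑B)^[k] (a * b) = (k.choose m : A) * ((⇑B)^[m] a * (⇑B)^[n] b) := by
  intro k
  induction k with
  | zero =>
    intro m n a b hmn _ _
    obtain ⟨rfl, rfl⟩ : m = 0 ∧ n = 0 := by omega
    simp
  | succ k ih =>
    intro m n a b hmn ha hb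
    rw [Function.iterate_succ_apply, Derivation.leibniz, smul_eq_mul, smul_eq_mul, iter_add]
    rcases Nat.eq_zero_or_pos m with hm | hm
    · subst hm
      have hn : n = k + 1 := by omega
      have haB : B a = 0 := by simpa using ha
      have t2 : (⇑B)^[k] (b * B a) = 0 := by rw [haB, mul_zero, iter_zero]
      have hb' : (⇑B)^[(n-1)+1] (B b) = 0 := by
        have e : (⇑B)^[(n-1)+1] (B b) = (⇑B)^[n+1] b := by
          rw [← Function.iterate_succ_apply]; congr 1; omega
        rw [e, hb]
      have t1 := ih 0 (n-1) a (B b) (by omega) ha hb'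
      have e : (⇑B)^[n-1] (B b) = (⇑B)^[n] b := by
        rw [← Function.iterate_succ_apply]; congr 1; omega
      rw [t1, t2, e]
      simp
    · rcases Nat.eq_zero_or_pos n with hn | hn
      · subst hn
        have hm' : m = k + 1 := by omega
        have hbB : B b = 0 := by simpa using hb
        have t1 : (⇑B)^[k] (a * B b) = 0 := by rw [hbB, mul_zero, iter_zero]
        have ha' : (⇑B)^[(m-1)+1] (B a) = 0 := by
          have e : (⇑B)^[(m-1)+1] (B a) = (⇑B)^[m+1] a := by
            rw [← Function.iterate_succ_apply]; congr 1; omega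
          rw [e, ha]
        have t2 := ih 0 (m-1) b (B a) (by omega) hb ha'
        have e : (⇑B)^[m-1] (B a) = (⇑B)^[m] a := by
          rw [← Function.iterate_succ_apply]; congr 1; omega
        rw [t1, t2, e, hm', Nat.choose_self, Nat.choose_zero_right]
        push_cast
        ring
      · have hb' : (⇑B)^[(n-1)+1] (B b) = 0 := by
          have e : (⇑B)^[(n-1)+1] (B b) = (⇑B)^[n+1] b := by
            rw [← Function.iterate_succ_apply]; congr 1; omega
          rw [e, hb]
        have ha' : (⇑B)^[(m-1)+1] (B a) = 0 := by
          have e : (⇑B)^[(m-1)+1] (B a) = (⇑B)^[m+1] a := by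
            rw [← Function.iterate_succ_apply]; congr 1; omega
          rw [e, ha]
        have t1 := ih m (n-1) a (B b) (by omega) ha hb'
        have t2 := ih n (m-1) b (B a) (by omega) hb ha'
        have eb : (⇑B)^[n-1] (B b) = (⇑B)^[n] b := by
          rw [← Function.iterate_succ_apply]; congr 1; omega
        have ea : (⇑B)^[m-1] (B a) = (⇑B)^[m] a := by
          rw [← Function.iterate_succ_apply]; congr 1; omega
        rw [t1, t2, ea, eb]
        have hsym : k.choose n = k.choose (m-1) := by
          rw [← Nat.choose_symm (by omega : n ≤ k)]
          congr 1
          omega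
        have hc : (k+1).choose m = k.choose (m-1) + k.choose m := by
          have e : m = (m-1) + 1 := by omega
          rw [e, Nat.choose_succ_succ']
          congr 2
        rw [hsym, hc]
        push_cast
        ring

end Aux

/-- For a locally nilpotent derivation `B` of an integral domain of characteristic
zero and `f ∈ A`, the derivation `f • B` is locally nilpotent iff `B f = 0`. -/
theorem smul_locallyNilpotent_iff {A : Type*} [CommRing A] [IsDomain A] [CharZero A]
    (B : Derivation ℤ A A) (hB : ∀ a : A, ∃ n : ℕ, (⇑B)^[n] a = 0) (f : A) :
    (∀ a : A, ∃ n : ℕ, (fun a => f * B a)^[n] a = 0) ↔ B f = 0 := by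
  constructor
  · -- forward: if f*B is locally nilpotent then B f = 0
    intro h
    by_contra hBf
    -- degree witness for f
    obtain ⟨d, hd1, hdne, hd0⟩ : ∃ d, 1 ≤ d ∧ (⇑B)^[d] f ≠ 0 ∧ (⇑B)^[d+1] f = 0 := by
      have hex := hB f
      classical
      set N := Nat.find hex with hN
      have hspec : (⇑B)^[N] f = 0 := Nat.find_spec hex
      have hN1 : 2 ≤ N := by
        rcases Nat.lt_or_ge N 2 with hlt | hge
        · interval_cases N
          · simp at hspec
            subst hspec
            simp at hBf
          · simp at hspec
            exact absurd hspec hBf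
        · exact hge
      refine ⟨N - 1, by omega, ?_, ?_⟩
      · intro hz
        exact absurd hz (Nat.find_min hex (by omega))
      · have : N - 1 + 1 = N := by omega
        rw [this, hspec]
    -- by induction, iterates of f*B applied to f never vanish
    have key : ∀ n : ℕ, ∃ m, 1 ≤ m ∧ (⇑B)^[m] ((fun a => f * B a)^[n] f) ≠ 0 ∧
        (⇑B)^[m+1] ((fun a => f * B a)^[n] f) = 0 := by
      intro n
      induction n with
      | zero => exact ⟨d, hd1, hdne, hd0⟩
      | succ n ih =>
        obtain ⟨m, hm1, hne, h0⟩ := ih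
        set a := (fun a => f * B a)^[n] f with ha
        have hstep : (fun a => f * B a)^[n+1] f = f * B a := by
          rw [Function.iterate_succ_apply']
        have hBane : (⇑B)^[m-1] (B a) ≠ 0 := by
          have e : (⇑B)^[m-1] (B a) = (⇑B)^[m] a := by
            rw [← Function.iterate_succ_apply]; congr 1; omega
          rw [e]; exact hne
        have hBa0 : (⇑B)^[(m-1)+1] (B a) = 0 := by
          have e : (⇑B)^[(m-1)+1] (B a) = (⇑B)^[m+1] a := by
            rw [← Function.iterate_succ_apply]; congr 1; omega
          rw [e, h0]
        refine ⟨d + (m-1), by omega, ?_, ?_⟩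
        · rw [hstep, iter_lead B (d + (m-1)) d (m-1) f (B a) rfl hd0 hBa0]
          have hcpos : 0 < (d + (m-1)).choose d := Nat.choose_pos (by omega)
          exact mul_ne_zero (by exact_mod_cast hcpos.ne')
            (mul_ne_zero hdne hBane)
        · rw [hstep]
          exact iter_vanish B (d + (m-1)) d (m-1) f (B a) rfl hd0 hBa0
    obtain ⟨n, hn⟩ := h f
    obtain ⟨m, _, hne, _⟩ := key n
    rw [hn, iter_zero] at hne
    exact hne rfl
  · -- backward: if B f = 0 then f*B is locally nilpotent
    intro hf a
    have hfn : ∀ n : ℕ, B (f ^ n) = 0 := by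
      intro n
      induction n with
      | zero => simp
      | succ n ihn =>
        rw [pow_succ, Derivation.leibniz, smul_eq_mul, smul_eq_mul, hf, ihn,
          mul_zero, mul_zero, add_zero]
    have key : ∀ n : ℕ, (fun a => f * B a)^[n] a = f ^ n * (⇑B)^[n] a := by
      intro n
      induction n with
      | zero => simp
      | succ n ih =>
        rw [Function.iterate_succ_apply', ih]
        show f * B (f ^ n * (⇑B)^[n] a) = f ^ (n+1) * (⇑B)^[n+1] a
        rw [Derivation.leibniz, smul_eq_mul, smul_eq_mul, hfn n, mul_zero, add_zero,
          Function.iterate_succ_apply']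
        ring
    obtain ⟨n, hn⟩ := hB a
    exact ⟨n, by rw [key n, hn, mul_zero]⟩
end

section
/- Let A be an integral domain of characteristic zero and B a locally nilpotent derivation of A. If f ∈ A satisfies B(f) ∈ fA (i.e. f divides B(f)), then B(f) = 0. -/
open Finset Nat

private theorem iter_leibniz {A : Type*} [CommRing A] (B : Derivation ℤ A A) (n : ℕ) (a b : A) :
    (⇑B)^[n] (a * b) = ∑ ij ∈ antidiagonal n, choose n ij.1 • ((⇑B)^[ij.1] a * (⇑B)^[ij.2] b) := by
  induction n with
  | zero => simp
  | succ n ih =>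
    rw [sum_antidiagonal_choose_succ_nsmul (M := A) (fun i j => (⇑B)^[i] a * (⇑B)^[j] b) n]
    have hl : ∀ x y : A, B (x * y) = x * B y + B x * y := by
      intro x y
      rw [B.leibniz]
      simp [smul_eq_mul, mul_comm]
    simp only [Function.iterate_succ_apply', ih, map_sum, map_nsmul, hl, smul_add,
      sum_add_distrib, add_right_inj]
    refine sum_congr rfl fun ⟨i, j⟩ hij ↦ ?_
    rw [n.choose_symm_of_eq_add (mem_antidiagonal.1 hij).symm]

private theorem iter_leibniz' {A : Type*} [CommRing A] (B : Derivation ℤ A A) (n : ℕ) (a b : A) :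
    (⇑B)^[n] (a * b) = ∑ i ∈ range (n + 1), n.choose i • ((⇑B)^[i] a * (⇑B)^[n - i] b) := by
  rw [iter_leibniz B n a b]
  exact sum_antidiagonal_eq_sum_range_succ (fun i j ↦ n.choose i • ((⇑B)^[i] a * (⇑B)^[j] b)) n

/-- If `B` is a locally nilpotent derivation of an integral domain of characteristic
zero and `f` divides `B f`, then `B f = 0`. -/
theorem deriv_eq_zero_of_dvd {A : Type*} [CommRing A] [IsDomain A] [CharZero A]
    (B : Derivation ℤ A A) (hB : ∀ a : A, ∃ n : ℕ, (⇑B)^[n] a = 0) (f : A)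
    (hdvd : B f ∈ Ideal.span ({f} : Set A)) :
    B f = 0 := by
  by_contra hne
  have hf : f ≠ 0 := by
    rintro rfl
    exact hne (by simp)
  obtain ⟨c, hc⟩ := Ideal.mem_span_singleton.mp hdvd
  have hcne : c ≠ 0 := by
    rintro rfl
    exact hne (by simp [hc])
  -- degree function
  have key : ∀ a : A, a ≠ 0 → ∃ n : ℕ, (⇑B)^[n] a ≠ 0 ∧ (⇑B)^[n + 1] a = 0 := by
    intro a ha
    obtain ⟨n, hn⟩ := hB a
    have hpos : n ≠ 0 := by rintro rfl; exact ha hn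
    -- take least m with B^[m] a = 0
    classical
    have hex : ∃ m, (⇑B)^[m] a = 0 := ⟨n, hn⟩
    set m := Nat.find hex with hm
    have hm0 : (⇑B)^[m] a = 0 := Nat.find_spec hex
    have hmpos : m ≠ 0 := by
      intro h
      rw [h] at hm0
      exact ha hm0
    refine ⟨m - 1, Nat.find_min hex (Nat.pred_lt hmpos), ?_⟩
    rwa [Nat.sub_add_cancel (Nat.one_le_iff_ne_zero.mpr hmpos)]
  obtain ⟨p, hp1, hp2⟩ := key f hf
  obtain ⟨q, hq1, hq2⟩ := key c hcne
  -- monotone vanishing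
  have vanish : ∀ (a : A) (k : ℕ), (⇑B)^[k] a = 0 → ∀ l, k ≤ l → (⇑B)^[l] a = 0 := by
    intro a k hk l hl
    obtain ⟨d, rfl⟩ := Nat.exists_eq_add_of_le hl
    rw [add_comm, Function.iterate_add_apply, hk]
    simp [Function.iterate_fixed]
  -- compute B^[p+q+1] f via  B f = f * c
  have hBf : B f = f * c := hc
  -- B^[p+q](B f) should be nonzero (top Leibniz term), but equals B^[p+q+1] f.
  have hzero : (⇑B)^[p + q + 1] f = 0 := vanish f (p + 1) hp2 _ (by omega)
  have hBfz : (⇑B)^[p + q] (B f) = 0 := by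
    have : (⇑B)^[p + q] (B f) = (⇑B)^[p + q + 1] f := by
      rw [Function.iterate_succ_apply]
    rw [this, hzero]
  rw [hBf, iter_leibniz'] at hBfz
  -- the sum has exactly one nonzero term, at i = p
  have hsingle : ∑ i ∈ range (p + q + 1), (p + q).choose i • ((⇑B)^[i] f * (⇑B)^[p + q - i] c)
      = (p + q).choose p • ((⇑B)^[p] f * (⇑B)^[p + q - p] c) := by
    refine Finset.sum_eq_single p ?_ ?_
    · intro i hi hip
      rcases lt_or_gt_of_ne hip with h | h
      · have : (⇑B)^[p + q - i] c = 0 := vanish c (q + 1) hq2 _ (by omega)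
        rw [this, mul_zero, smul_zero]
      · have : (⇑B)^[i] f = 0 := vanish f (p + 1) hp2 _ (by omega)
        rw [this, zero_mul, smul_zero]
    · intro h
      exact absurd (Finset.mem_range.mpr (by omega)) h
  rw [hsingle] at hBfz
  have hpq : p + q - p = q := by omega
  rw [hpq] at hBfz
  have hmul : (⇑B)^[p] f * (⇑B)^[q] c ≠ 0 := mul_ne_zero hp1 hq1
  have hch : ((p + q).choose p : ℕ) ≠ 0 := (Nat.choose_pos (Nat.le_add_right p q)).ne'
  rw [nsmul_eq_mul] at hBfz
  exact hmul (by
    have : ((p + q).choose p : A) ≠ 0 := Nat.cast_ne_zero.mpr hch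
    exact (mul_eq_zero.mp hBfz).resolve_left this)
end

section
/- Let A be a ℚ-algebra that is an integral domain. The exponential map B ↦ exp(B) from the set of locally nilpotent derivations of A to the set of ℚ-algebra automorphisms of A is injective. -/
open Finset

/-- `E` is the exponential of the locally nilpotent map `D`:
for every `a` and every `N` beyond the nilpotency index of `a`,
`E a = ∑_{i<N} D^i(a) / i!`. -/
def IsExp {A : Type*} [CommRing A] [Algebra ℚ A] (D E : A → A) : Prop :=
  ∀ (a : A) (N : ℕ), (∀ i, N ≤ i → D^[i] a = 0) →
    E a = ∑ i ∈ Finset.range N, ((i.factorial : ℚ)⁻¹) • D^[i] a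

private lemma exp_iterate_formula {A : Type*} [CommRing A] [Algebra ℚ A]
    (B : Derivation ℚ A A) (E : A → A) (hE : IsExp (⇑B) E)
    (a : A) (n : ℕ) (hpos : 0 < n) (hn : ∀ i, n ≤ i → (⇑B)^[i] a = 0) :
    ∀ m : ℕ, E^[m] a = ∑ i ∈ range n, (((m : ℚ) ^ i / i.factorial) • (⇑B)^[i] a) := by
  intro m
  induction m with
  | zero =>
      rw [Function.iterate_zero_apply, Finset.sum_eq_single 0]
      · simp
      · intro i _ hi
        simp [zero_pow hi]
      · intro h
        exact absurd (mem_range.mpr hpos) h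
  | succ m ih =>
      have hiter : ∀ j, (⇑B)^[j] (∑ i ∈ range n, (((m : ℚ) ^ i / i.factorial) • (⇑B)^[i] a))
          = ∑ i ∈ range n, (((m : ℚ) ^ i / i.factorial) • (⇑B)^[i + j] a) := by
        intro j
        have h1 : (⇑B)^[j] (∑ i ∈ range n, (((m : ℚ) ^ i / i.factorial) • (⇑B)^[i] a))
            = ((B : A →ₗ[ℚ] A) ^ j) (∑ i ∈ range n, (((m : ℚ) ^ i / i.factorial) • (⇑B)^[i] a)) := by
          rw [Module.End.pow_apply, Derivation.coeFn_coe]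
        rw [h1, map_sum]
        refine Finset.sum_congr rfl fun i _ => ?_
        rw [map_smul, Module.End.pow_apply, Derivation.coeFn_coe]
        congr 1
        rw [add_comm i j, Function.iterate_add_apply]
      have hx : ∀ j, n ≤ j →
          (⇑B)^[j] (∑ i ∈ range n, (((m : ℚ) ^ i / i.factorial) • (⇑B)^[i] a)) = 0 := by
        intro j hj
        rw [hiter j]
        refine Finset.sum_eq_zero fun i _ => ?_
        rw [hn (i + j) (le_trans hj (Nat.le_add_left _ _)), smul_zero]
      rw [Function.iterate_succ_apply', ih, hE _ n hx]
      have hsum : ∀ j ∈ range n, ((j.factorial : ℚ)⁻¹) •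
            ((⇑B)^[j] (∑ i ∈ range n, (((m : ℚ) ^ i / i.factorial) • (⇑B)^[i] a)))
          = ∑ i ∈ range n,
              (((j.factorial : ℚ)⁻¹ * ((m : ℚ) ^ i / i.factorial)) • (⇑B)^[i + j] a) := by
        intro j _
        rw [hiter j, Finset.smul_sum]
        exact Finset.sum_congr rfl fun i _ => (smul_smul _ _ _)
      rw [Finset.sum_congr rfl hsum, Finset.sum_comm]
      have hinner : ∀ i ∈ range n,
          (∑ j ∈ range n, (((j.factorial : ℚ)⁻¹ * ((m : ℚ) ^ i / i.factorial)) • (⇑B)^[i + j] a))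
          = ∑ k ∈ range n, (((m : ℚ) ^ i * (k.choose i) / k.factorial) • (⇑B)^[k] a) := by
        intro i _
        have hterm : ∀ j : ℕ,
            (((j.factorial : ℚ)⁻¹ * ((m : ℚ) ^ i / i.factorial)) • (⇑B)^[i + j] a)
            = ((m : ℚ) ^ i * ((i + j).choose i) / (i + j).factorial) • (⇑B)^[i + j] a := by
          intro j
          congr 1
          have h1 : ((i + j).choose i : ℚ) * i.factorial * j.factorial = (i + j).factorial := by
            exact_mod_cast congrArg (Nat.cast : ℕ → ℚ)
              (by simpa using Nat.choose_mul_factorial_mul_factorial (Nat.le_add_right i j))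
          have hif : (i.factorial : ℚ) ≠ 0 := Nat.cast_ne_zero.mpr i.factorial_ne_zero
          have hjf : (j.factorial : ℚ) ≠ 0 := Nat.cast_ne_zero.mpr j.factorial_ne_zero
          have hijf : ((i + j).factorial : ℚ) ≠ 0 := Nat.cast_ne_zero.mpr (i + j).factorial_ne_zero
          field_simp
          linear_combination (-((m : ℚ) ^ i)) * h1
        rw [Finset.sum_congr rfl fun j _ => hterm j]
        set h : ℕ → A := fun k => ((m : ℚ) ^ i * (k.choose i) / k.factorial) • (⇑B)^[k] a with hh
        have e1 : ∑ j ∈ range n, h (i + j) = ∑ k ∈ Ico i (i + n), h k := by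
          rw [Finset.sum_Ico_eq_sum_range]
          simp
        have e2 : ∑ k ∈ range i, h k = 0 := by
          refine Finset.sum_eq_zero fun k hk => ?_
          have hc : k.choose i = 0 := Nat.choose_eq_zero_of_lt (mem_range.mp hk)
          simp [hh, hc]
        have e3 : ∑ k ∈ Ico n (i + n), h k = 0 := by
          refine Finset.sum_eq_zero fun k hk => ?_
          have hz : (⇑B)^[k] a = 0 := hn k (mem_Ico.mp hk).1
          simp [hh, hz]
        have e4 : ∑ k ∈ Ico i (i + n), h k = ∑ k ∈ range n, h k := by
          have l1 : ∑ k ∈ range i, h k + ∑ k ∈ Ico i (i + n), h k = ∑ k ∈ range (i + n), h k :=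
            Finset.sum_range_add_sum_Ico h (Nat.le_add_right i n)
          have l2 : ∑ k ∈ range n, h k + ∑ k ∈ Ico n (i + n), h k = ∑ k ∈ range (i + n), h k :=
            Finset.sum_range_add_sum_Ico h (Nat.le_add_left n i)
          rw [e2, zero_add] at l1
          rw [e3, add_zero] at l2
          rw [l1, l2]
        exact e1.trans e4
      rw [Finset.sum_congr rfl hinner, Finset.sum_comm]
      refine Finset.sum_congr rfl fun k hk => ?_
      have hcollect : ∑ i ∈ range n, (((m : ℚ) ^ i * (k.choose i) / k.factorial) • (⇑B)^[k] a)
          = ((∑ i ∈ range n, (m : ℚ) ^ i * (k.choose i)) / k.factorial) • (⇑B)^[k] a := by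
        rw [Finset.sum_div, ← Finset.sum_smul]
      rw [hcollect]
      congr 1
      have hshrink : ∑ i ∈ range n, (m : ℚ) ^ i * (k.choose i)
          = ∑ i ∈ range (k + 1), (m : ℚ) ^ i * (k.choose i) := by
        refine (Finset.sum_subset (Finset.range_subset_range.mpr (mem_range.mp hk)) ?_).symm
        intro i _ hi
        have : k.choose i = 0 := Nat.choose_eq_zero_of_lt (by
          have := mem_range.not.mp hi
          omega)
        simp [this]
      rw [hshrink]
      have hbin : ((m : ℚ) + 1) ^ k = ∑ i ∈ range (k + 1), (m : ℚ) ^ i * (k.choose i) := by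
        have := add_pow (m : ℚ) 1 k
        simpa using this
      rw [← hbin]
      push_cast
      ring

/-- The exponential map is injective on locally nilpotent derivations of an
integral domain that is a `ℚ`-algebra. -/
theorem exp_injective {A : Type*} [CommRing A] [IsDomain A] [Algebra ℚ A]
    (B B' : Derivation ℚ A A)
    (hB : ∀ a : A, ∃ n : ℕ, (⇑B)^[n] a = 0) (hB' : ∀ a : A, ∃ n : ℕ, (⇑B')^[n] a = 0)
    (E : A → A) (hE : IsExp (⇑B) E) (hE' : IsExp (⇑B') E) :
    B = B' := by
  ext a
  obtain ⟨n₁, hn₁⟩ := hB a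
  obtain ⟨n₂, hn₂⟩ := hB' a
  set n : ℕ := n₁ + n₂ + 2 with hn
  have hvan : ∀ i, n ≤ i → (⇑B)^[i] a = 0 := by
    intro i hi
    have : i = (i - n₁) + n₁ := by omega
    rw [this, Function.iterate_add_apply, hn₁]
    exact Function.iterate_fixed (map_zero B) _
  have hvan' : ∀ i, n ≤ i → (⇑B')^[i] a = 0 := by
    intro i hi
    have : i = (i - n₂) + n₂ := by omega
    rw [this, Function.iterate_add_apply, hn₂]
    exact Function.iterate_fixed (map_zero B') _
  have hpos : 0 < n := by omega
  have key : ∀ m : ℕ, ∑ i ∈ range n, (((m : ℚ) ^ i / i.factorial) • (⇑B)^[i] a)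
      = ∑ i ∈ range n, (((m : ℚ) ^ i / i.factorial) • (⇑B')^[i] a) := by
    intro m
    rw [← exp_iterate_formula B E hE a n hpos hvan m,
      ← exp_iterate_formula B' E hE' a n hpos hvan' m]
  -- build a polynomial over A vanishing at all naturals
  haveI : CharZero A := charZero_of_injective_algebraMap (algebraMap ℚ A).injective
  set p : Polynomial A := ∑ i ∈ range n,
      Polynomial.monomial i ((i.factorial : ℚ)⁻¹ • ((⇑B)^[i] a - (⇑B')^[i] a)) with hp
  have hroot : ∀ m : ℕ, p.eval (m : A) = 0 := by
    intro m
    have hterm : ∀ i : ℕ,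
        ((i.factorial : ℚ)⁻¹ • ((⇑B)^[i] a - (⇑B')^[i] a)) * (m : A) ^ i
        = ((m : ℚ) ^ i / i.factorial) • (⇑B)^[i] a
          - ((m : ℚ) ^ i / i.factorial) • (⇑B')^[i] a := by
      intro i
      have hcast : ((m : A)) ^ i = algebraMap ℚ A ((m : ℚ) ^ i) := by
        rw [map_pow, map_natCast]
      rw [hcast, mul_comm, ← Algebra.smul_def, smul_smul, smul_sub]
      congr 2 <;> ring_nf
    rw [hp, Polynomial.eval_finset_sum]
    simp only [Polynomial.eval_monomial]
    calc ∑ i ∈ range n, ((i.factorial : ℚ)⁻¹ • ((⇑B)^[i] a - (⇑B')^[i] a)) * (m : A) ^ i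
        = ∑ i ∈ range n, (((m : ℚ) ^ i / i.factorial) • (⇑B)^[i] a
            - ((m : ℚ) ^ i / i.factorial) • (⇑B')^[i] a) :=
          Finset.sum_congr rfl fun i _ => hterm i
      _ = 0 := by rw [Finset.sum_sub_distrib, key m, sub_self]
  have hp0 : p = 0 := by
    apply Polynomial.eq_zero_of_infinite_isRoot
    apply Set.Infinite.mono (s := Set.range (Nat.cast : ℕ → A))
    · rintro x ⟨m, rfl⟩
      exact hroot m
    · exact Set.infinite_range_of_injective Nat.cast_injective
  have hcoeff : p.coeff 1 = (1 : ℚ)⁻¹ • ((⇑B)^[1] a - (⇑B')^[1] a) := by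
    rw [hp, Polynomial.finset_sum_coeff]
    rw [Finset.sum_eq_single 1]
    · simp
    · intro i _ hi
      rw [Polynomial.coeff_monomial, if_neg hi]
    · intro h
      exact absurd (mem_range.mpr (by omega)) h
  rw [hp0] at hcoeff
  simp only [Polynomial.coeff_zero, inv_one, one_smul, Function.iterate_one] at hcoeff
  have := sub_eq_zero.mp hcoeff.symm
  simpa using this
end

section
/- Let A be a ℚ-algebra that is an integral domain, and let B be a derivation of A and s ∈ A with B(s) = 1 and B locally nilpotent. Then A is a polynomial ring in s over ker B; that is, the evaluation map (ker B)[X] → A sending X to s is an isomorphism of (ker B)-algebras, and under this identification B corresponds to d/ds. -/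
/-- The kernel of a derivation, as a subalgebra. -/
def Derivation.kerSubalgebra {A : Type*} [CommRing A] [Algebra ℚ A]
    (B : Derivation ℚ A A) : Subalgebra ℚ A where
  carrier := {a | B a = 0}
  mul_mem' := by
    intro a b ha hb
    simp only [Set.mem_setOf_eq] at *
    rw [Derivation.leibniz]
    simp [ha, hb]
  add_mem' := by
    intro a b ha hb
    simp only [Set.mem_setOf_eq] at *
    rw [map_add, ha, hb, add_zero]
  algebraMap_mem' := fun r => by
    simp [Set.mem_setOf_eq]

/-- Slice theorem: if `B` is a locally nilpotent derivation of an integral domain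
`A` (a `ℚ`-algebra) and `B s = 1`, then `A` is a polynomial ring in `s` over
`ker B`, and `B` corresponds to `d/ds`. -/
theorem slice_theorem {A : Type*} [CommRing A] [IsDomain A] [Algebra ℚ A]
    (B : Derivation ℚ A A) (hB : ∀ a : A, ∃ n : ℕ, (⇑B)^[n] a = 0)
    (s : A) (hs : B s = 1) :
    Function.Bijective (Polynomial.aeval (R := B.kerSubalgebra) s :
        Polynomial B.kerSubalgebra →ₐ[B.kerSubalgebra] A) ∧
    ∀ p : Polynomial B.kerSubalgebra,
      B (Polynomial.aeval (R := B.kerSubalgebra) s p) =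
        Polynomial.aeval (R := B.kerSubalgebra) s (Polynomial.derivative p) := by
  set K := B.kerSubalgebra with hK
  haveI : CharZero K := charZero_of_injective_algebraMap (algebraMap ℚ K).injective
  have hmem : ∀ a : A, a ∈ K ↔ B a = 0 := fun a => Iff.rfl
  have hcoe : ∀ a : K, algebraMap K A a = (a : A) := fun a => rfl
  have hker : ∀ a : K, B (a : A) = 0 := fun a => (hmem a).mp a.2
  -- Part 2: the derivative formula
  have hder : ∀ p : Polynomial K, B (Polynomial.aeval (R := K) s p) =
      Polynomial.aeval (R := K) s (Polynomial.derivative p) := by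
    intro p
    induction p using Polynomial.induction_on' with
    | add p q hp hq => rw [map_add, map_add, map_add, hp, hq, map_add]
    | monomial n a =>
      rw [Polynomial.aeval_monomial, Polynomial.derivative_monomial,
        Polynomial.aeval_monomial, hcoe, hcoe]
      rw [Derivation.leibniz, hker a, smul_zero, add_zero, Derivation.leibniz_pow, hs]
      cases n with
      | zero => simp
      | succ m =>
        simp only [smul_eq_mul, mul_one, Nat.add_sub_cancel, Nat.cast_add, Nat.cast_one,
          nsmul_eq_mul]
        push_cast
        ring
  -- antiderivatives exist
  have hanti : ∀ p : Polynomial K, ∃ q : Polynomial K, Polynomial.derivative q = p := by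
    intro p
    refine ⟨p.sum fun n a => Polynomial.C ((((n : ℚ) + 1)⁻¹) • a) * Polynomial.X ^ (n + 1), ?_⟩
    rw [Polynomial.sum_def, map_sum]
    have : ∀ n ∈ p.support, Polynomial.derivative
        (Polynomial.C ((((n : ℚ) + 1)⁻¹) • (p.coeff n)) * Polynomial.X ^ (n + 1)) =
        Polynomial.C (p.coeff n) * Polynomial.X ^ n := by
      intro n _
      rw [Polynomial.derivative_C_mul_X_pow, Nat.add_sub_cancel]
      congr 1
      have h1 : ((n + 1 : ℕ) : K) = algebraMap ℚ K ((n : ℚ) + 1) := by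
        push_cast; rfl
      rw [h1, mul_comm, ← Algebra.smul_def, smul_smul,
        mul_inv_cancel₀ (by positivity : ((n : ℚ) + 1) ≠ 0), one_smul]
    rw [Finset.sum_congr rfl this]
    exact (Polynomial.sum_def p _).symm.trans (Polynomial.sum_C_mul_X_pow_eq p)
  -- injectivity
  have hinjaux : ∀ d : ℕ, ∀ p : Polynomial K, p.natDegree ≤ d →
      Polynomial.aeval (R := K) s p = 0 → p = 0 := by
    intro d
    induction d with
    | zero =>
      intro p hdeg hp
      rw [Polynomial.eq_C_of_natDegree_le_zero hdeg] at hp ⊢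
      rw [Polynomial.aeval_C, hcoe] at hp
      have : p.coeff 0 = 0 := Subtype.ext hp
      rw [this, map_zero]
    | succ d ih =>
      intro p hdeg hp
      have hd0 : Polynomial.aeval (R := K) s (Polynomial.derivative p) = 0 := by
        rw [← hder, hp, map_zero]
      have hdderiv : (Polynomial.derivative p).natDegree ≤ d := by
        have := Polynomial.natDegree_derivative_le p
        omega
      have hder0 : Polynomial.derivative p = 0 := ih _ hdderiv hd0
      have hnd : p.natDegree = 0 := Polynomial.natDegree_eq_zero_of_derivative_eq_zero hder0
      rw [Polynomial.eq_C_of_natDegree_le_zero hnd.le] at hp ⊢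
      rw [Polynomial.aeval_C, hcoe] at hp
      have : p.coeff 0 = 0 := Subtype.ext hp
      rw [this, map_zero]
  -- surjectivity
  have hsurjaux : ∀ n : ℕ, ∀ a : A, (⇑B)^[n] a = 0 →
      ∃ p : Polynomial K, Polynomial.aeval (R := K) s p = a := by
    intro n
    induction n with
    | zero =>
      intro a ha
      simp only [Function.iterate_zero, id_eq] at ha
      exact ⟨0, by simp [ha]⟩
    | succ m ih =>
      intro a ha
      obtain ⟨p, hp⟩ := ih (B a) (by rwa [← Function.iterate_succ_apply])
      obtain ⟨q, hq⟩ := hanti p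
      have hc : B (a - Polynomial.aeval (R := K) s q) = 0 := by
        rw [map_sub, hder, hq, hp, sub_self]
      refine ⟨q + Polynomial.C ⟨a - Polynomial.aeval (R := K) s q, hc⟩, ?_⟩
      rw [map_add, Polynomial.aeval_C, hcoe]
      push_cast
      ring
  refine ⟨⟨fun p q hpq => ?_, fun a => ?_⟩, hder⟩
  · have : Polynomial.aeval (R := K) s (p - q) = 0 := by rw [map_sub, hpq, sub_self]
    have h0 : p - q = 0 := hinjaux (p - q).natDegree _ le_rfl this
    exact sub_eq_zero.mp h0
  · obtain ⟨n, hn⟩ := hB a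
    exact hsurjaux n a hn
end

section
/- Let A be a unique factorization domain containing ℚ, let B, B' be nonzero locally nilpotent derivations of A with B' irreducible and ker B = ker B'. Let φ : A → A be a ring automorphism that restricts to the identity on ker B and commutes with B, and assume that there exists d ∈ ker B, d ≠ 0, and s in the localization A_d with B(s) = 1 (extending B to A_d). Then there exists f ∈ ker B such that φ = exp(f B'). -/
open Finset

/-- Local nilpotency of a map. -/
def IsLND {A : Type*} [Zero A] (D : A → A) : Prop := ∀ a : A, ∃ n : ℕ, D^[n] a = 0

/-- A locally nilpotent derivation `B'` is irreducible if `B' ≠ 0` and whenever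
`B' = g • B''` with `B''` locally nilpotent and `g ∈ ker B''`, `g` is a unit. -/
def IsIrreducibleLND {A : Type*} [CommRing A] [Algebra ℚ A] (B' : Derivation ℚ A A) : Prop :=
  B' ≠ 0 ∧ IsLND ⇑B' ∧
    ∀ (g : A) (B'' : Derivation ℚ A A), IsLND ⇑B'' → B'' g = 0 → B' = g • B'' → IsUnit g

set_option linter.unusedSectionVars false
set_option linter.unusedVariables false

namespace AutoExpAux


section Aux
variable {A : Type*} [CommRing A] [IsDomain A] [Algebra ℚ A]

theorem iter_zero (D : Derivation ℚ A A) (n : ℕ) : (⇑D)^[n] 0 = 0 :=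
  Function.iterate_fixed (map_zero D) n

theorem iter_add (D : Derivation ℚ A A) (n : ℕ) (x y : A) :
    (⇑D)^[n] (x + y) = (⇑D)^[n] x + (⇑D)^[n] y := by
  induction n generalizing x y with
  | zero => rfl
  | succ n ih =>
    rw [Function.iterate_succ_apply, Function.iterate_succ_apply,
      Function.iterate_succ_apply, map_add, ih]

theorem iter_smul (D : Derivation ℚ A A) (n : ℕ) (q : ℚ) (x : A) :
    (⇑D)^[n] (q • x) = q • (⇑D)^[n] x := by
  induction n generalizing x with
  | zero => rfl
  | succ n ih =>
    rw [Function.iterate_succ_apply, Function.iterate_succ_apply, Derivation.map_smul, ih]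

theorem iter_const_mul (D : Derivation ℚ A A) {c : A} (hc : D c = 0) (n : ℕ) (x : A) :
    (⇑D)^[n] (c * x) = c * (⇑D)^[n] x := by
  induction n generalizing x with
  | zero => rfl
  | succ n ih =>
    have : D (c * x) = c * D x := by
      rw [Derivation.leibniz, hc, smul_zero, add_zero, smul_eq_mul]
    rw [Function.iterate_succ_apply, Function.iterate_succ_apply, this, ih]

theorem iter_stable (D : Derivation ℚ A A) {n m : ℕ} {a : A} (h : (⇑D)^[n] a = 0)
    (hnm : n ≤ m) : (⇑D)^[m] a = 0 := by
  obtain ⟨k, rfl⟩ := Nat.exists_eq_add_of_le hnm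
  rw [Nat.add_comm, Function.iterate_add_apply, h, iter_zero]

theorem iter_leibniz (D : Derivation ℚ A A) (n : ℕ) (x y : A) :
    (⇑D)^[n] (x * y)
      = ∑ i ∈ range (n + 1), n.choose i • ((⇑D)^[i] x * (⇑D)^[n - i] y) := by
  induction n generalizing x y with
  | zero => simp
  | succ n ih =>
    rw [Function.iterate_succ_apply', ih, map_sum]
    have hterm : ∀ i, D (n.choose i • ((⇑D)^[i] x * (⇑D)^[n - i] y))
        = n.choose i • ((⇑D)^[i+1] x * (⇑D)^[n - i] y)
          + n.choose i • ((⇑D)^[i] x * (⇑D)^[n - i + 1] y) := by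
      intro i
      rw [map_nsmul, Derivation.leibniz, smul_eq_mul, smul_eq_mul, smul_add,
        Function.iterate_succ_apply', Function.iterate_succ_apply']
      ring_nf
    rw [Finset.sum_congr rfl fun i _ => hterm i, Finset.sum_add_distrib]
    have h1 : ∑ i ∈ range (n + 1), n.choose i • ((⇑D)^[i+1] x * (⇑D)^[n - i] y)
        = ∑ j ∈ range (n + 2),
            (if j = 0 then 0 else n.choose (j - 1)) • ((⇑D)^[j] x * (⇑D)^[n + 1 - j] y) := by
      rw [eq_comm, Finset.sum_range_succ']
      simp only [if_true, if_false, Nat.sub_zero, zero_smul, add_zero, Nat.succ_sub_succ]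
      exact Finset.sum_congr rfl fun i _ => by rw [if_neg (Nat.succ_ne_zero i)]
    have h2 : ∑ i ∈ range (n + 1), n.choose i • ((⇑D)^[i] x * (⇑D)^[n - i + 1] y)
        = ∑ j ∈ range (n + 2), n.choose j • ((⇑D)^[j] x * (⇑D)^[n + 1 - j] y) := by
      conv_rhs => rw [Finset.sum_range_succ]
      rw [Nat.choose_succ_self, zero_smul, add_zero]
      refine Finset.sum_congr rfl fun i hi => ?_
      have : n - i + 1 = n + 1 - i := by
        rw [Finset.mem_range] at hi; omega
      rw [this]
    rw [h1, h2, ← Finset.sum_add_distrib]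
    refine Finset.sum_congr rfl fun j _ => ?_
    rw [← add_nsmul]
    congr 1
    cases j with
    | zero => simp
    | succ k => rw [if_neg (Nat.succ_ne_zero k), Nat.succ_sub_one, Nat.choose_succ_succ]

end Aux

section Nu
open scoped Classical
variable {A : Type*} [CommRing A] [IsDomain A] [Algebra ℚ A]
variable (D : Derivation ℚ A A) (hD : IsLND ⇑D)

noncomputable def lndNu (a : A) : ℕ := Nat.find (hD a)

theorem lndNu_spec (a : A) : (⇑D)^[lndNu D hD a] a = 0 := Nat.find_spec (hD a)

theorem iter_eq_zero_of_nu_le {a : A} {n : ℕ} (h : lndNu D hD a ≤ n) : (⇑D)^[n] a = 0 :=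
  iter_stable D (lndNu_spec D hD a) h

theorem lndNu_le {a : A} {n : ℕ} (h : (⇑D)^[n] a = 0) : lndNu D hD a ≤ n := Nat.find_le h

theorem lndNu_eq {a : A} {n : ℕ} (h1 : (⇑D)^[n+1] a = 0) (h2 : (⇑D)^[n] a ≠ 0) :
    lndNu D hD a = n + 1 := by
  refine le_antisymm (lndNu_le D hD h1) ?_
  by_contra hc
  exact h2 (iter_eq_zero_of_nu_le D hD (by omega))

theorem lndNu_pos {a : A} (ha : a ≠ 0) : 1 ≤ lndNu D hD a := by
  by_contra hc
  exact ha (by simpa using iter_eq_zero_of_nu_le D hD (n := 0) (by omega))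

theorem lndNu_top_ne {a : A} (ha : a ≠ 0) : (⇑D)^[lndNu D hD a - 1] a ≠ 0 := by
  intro h
  have h1 := lndNu_pos D hD ha
  have := lndNu_le D hD h
  omega

theorem lndNu_mul {x y : A} (hx : x ≠ 0) (hy : y ≠ 0) :
    lndNu D hD (x * y) = lndNu D hD x + lndNu D hD y - 1 := by
  haveI : CharZero A := charZero_of_injective_algebraMap (algebraMap ℚ A).injective
  obtain ⟨p, hp⟩ : ∃ p, lndNu D hD x = p + 1 :=
    ⟨lndNu D hD x - 1, by have := lndNu_pos D hD hx; omega⟩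
  obtain ⟨q, hq⟩ : ∃ q, lndNu D hD y = q + 1 :=
    ⟨lndNu D hD y - 1, by have := lndNu_pos D hD hy; omega⟩
  have hxv : ∀ {i}, p + 1 ≤ i → (⇑D)^[i] x = 0 := fun h =>
    iter_eq_zero_of_nu_le D hD (by omega)
  have hyv : ∀ {i}, q + 1 ≤ i → (⇑D)^[i] y = 0 := fun h =>
    iter_eq_zero_of_nu_le D hD (by omega)
  have htop : (⇑D)^[p + q + 1] (x * y) = 0 := by
    rw [iter_leibniz]
    refine Finset.sum_eq_zero fun i hi => ?_
    rcases le_or_gt i p with h | h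
    · rw [hyv (i := p + q + 1 - i) (by omega), mul_zero, smul_zero]
    · rw [hxv (i := i) (by omega), zero_mul, smul_zero]
  have hmid : (⇑D)^[p + q] (x * y) ≠ 0 := by
    rw [iter_leibniz]
    rw [Finset.sum_eq_single p]
    · have h1 : (⇑D)^[p] x ≠ 0 := by
        have := lndNu_top_ne D hD hx; rw [hp] at this; simpa using this
      have h2 : (⇑D)^[p + q - p] y ≠ 0 := by
        have := lndNu_top_ne D hD hy; rw [hq] at this; simpa using this
      have h3 : ((p + q).choose p : A) ≠ 0 :=
        Nat.cast_ne_zero.mpr (Nat.choose_pos (by omega)).ne'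
      rw [nsmul_eq_mul]
      exact mul_ne_zero h3 (mul_ne_zero h1 h2)
    · intro i _ hip
      rcases lt_or_gt_of_ne hip with h | h
      · rw [hyv (i := p + q - i) (by omega), mul_zero, smul_zero]
      · rw [hxv (i := i) (by omega), zero_mul, smul_zero]
    · intro h
      exact absurd (Finset.mem_range.mpr (by omega)) h
  rw [lndNu_eq D hD htop hmid, hp, hq]
  omega

theorem lndNu_deriv {a : A} (h : D a ≠ 0) : lndNu D hD (D a) = lndNu D hD a - 1 := by
  have ha : a ≠ 0 := by rintro rfl; exact h (map_zero D)
  have h2 : 2 ≤ lndNu D hD a := by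
    rcases Nat.lt_or_ge (lndNu D hD a) 2 with hc | hc
    · exfalso
      exact h (by simpa using iter_eq_zero_of_nu_le D hD (n := 1) (by omega))
    · exact hc
  obtain ⟨k, hk⟩ : ∃ k, lndNu D hD a = k + 2 := ⟨lndNu D hD a - 2, by omega⟩
  have e1 : (⇑D)^[k + 1] (D a) = 0 := by
    rw [← Function.iterate_succ_apply]
    exact iter_eq_zero_of_nu_le D hD (by omega)
  have e2 : (⇑D)^[k] (D a) ≠ 0 := by
    rw [← Function.iterate_succ_apply]
    have := lndNu_top_ne D hD ha
    rw [hk] at this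
    simpa using this
  rw [lndNu_eq D hD e1 e2, hk]
  omega

include hD in
theorem deriv_eq_zero_of_dvd {a : A} (h : a ∣ D a) : D a = 0 := by
  by_contra hne
  have ha : a ≠ 0 := by rintro rfl; exact hne (map_zero D)
  obtain ⟨w, hw⟩ := h
  have hwne : w ≠ 0 := by rintro rfl; rw [mul_zero] at hw; exact hne hw
  have h1 := lndNu_deriv D hD hne
  have h2 : lndNu D hD (D a) = lndNu D hD a + lndNu D hD w - 1 := by
    rw [hw]; exact lndNu_mul D hD ha hwne
  have := lndNu_pos D hD hwne
  have h3 : 2 ≤ lndNu D hD a := by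
    rcases Nat.lt_or_ge (lndNu D hD a) 2 with hc | hc
    · exact absurd (by simpa using iter_eq_zero_of_nu_le D hD (n := 1) (by omega)) hne
    · exact hc
  omega

end Nu

section Slice
variable {A : Type*} [CommRing A] [IsDomain A] [Algebra ℚ A]
variable (B : Derivation ℚ A A) {s c : A} (hsc : B s = c) (hc : B c = 0)

theorem qsmul_nat_cancel {n : ℕ} (hn : n ≠ 0) (z : A) : ((n : ℚ))⁻¹ • (n • z) = z := by
  rw [← Nat.cast_smul_eq_nsmul ℚ, smul_smul, inv_mul_cancel₀ (by exact_mod_cast hn), one_smul]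

include hsc hc in
theorem deriv_pow_s (i : ℕ) : B (s ^ i) = i • (s ^ (i - 1) * c) := by
  rw [Derivation.leibniz_pow, hsc, smul_eq_mul]

include hc in
theorem deriv_pow_c (m : ℕ) : B (c ^ m) = 0 := by
  rw [Derivation.leibniz_pow, hc, smul_zero, smul_zero]

theorem iter_nsmul (D : Derivation ℚ A A) (j : ℕ) (n : ℕ) (x : A) :
    (⇑D)^[j] (n • x) = n • (⇑D)^[j] x := by
  induction j generalizing x with
  | zero => rfl
  | succ j ih => rw [Function.iterate_succ_apply, Function.iterate_succ_apply, map_nsmul, ih]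

include hsc hc in
theorem iter_pow_s (j i : ℕ) : (⇑B)^[j] (s ^ i) = i.descFactorial j • (s ^ (i - j) * c ^ j) := by
  induction j generalizing i with
  | zero => simp
  | succ j ih =>
    rw [Function.iterate_succ_apply, deriv_pow_s B hsc hc, iter_nsmul, mul_comm,
      iter_const_mul B hc, ih]
    cases i with
    | zero => simp
    | succ i =>
      simp only [Nat.add_sub_cancel, Nat.succ_sub_succ, Nat.succ_descFactorial_succ,
        Nat.sub_zero]
      rw [nsmul_eq_mul, nsmul_eq_mul, nsmul_eq_mul, Nat.cast_mul]
      ring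

include hsc hc in
theorem taylor (N : ℕ) (a : A) (h : (⇑B)^[N] a = 0) :
    ∃ (m : ℕ) (k : ℕ → A), (∀ i, B (k i) = 0) ∧ c ^ m * a = ∑ i ∈ Finset.range N, k i * s ^ i := by
  induction N generalizing a with
  | zero =>
    exact ⟨0, 0, fun i => map_zero B, by simpa using h⟩
  | succ N ih =>
    obtain ⟨m, k, hk, hT⟩ := ih (B a) (by rwa [← Function.iterate_succ_apply])
    set Q : A := ∑ i ∈ Finset.range N, (((i + 1 : ℕ) : ℚ))⁻¹ • (k i * s ^ (i + 1)) with hQ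
    have hBQ : B Q = c * (c ^ m * B a) := by
      rw [hQ, map_sum]
      have hterm : ∀ i : ℕ, B ((((i + 1 : ℕ) : ℚ))⁻¹ • (k i * s ^ (i + 1)))
          = k i * s ^ i * c := by
        intro i
        rw [Derivation.map_smul, Derivation.leibniz, hk, smul_zero, add_zero, smul_eq_mul,
          deriv_pow_s B hsc hc, Nat.add_sub_cancel, mul_smul_comm,
          qsmul_nat_cancel (Nat.succ_ne_zero i), mul_assoc]
      rw [Finset.sum_congr rfl fun i _ => hterm i, hT, Finset.mul_sum]
      exact Finset.sum_congr rfl fun i _ => by ring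
    have hknew : B (c ^ (m + 1) * a - Q) = 0 := by
      rw [map_sub, Derivation.leibniz, deriv_pow_c B hc, smul_zero, add_zero, smul_eq_mul,
        hBQ]
      ring
    refine ⟨m + 1, fun j => match j with
      | 0 => c ^ (m + 1) * a - Q
      | (i + 1) => (((i + 1 : ℕ)) : ℚ)⁻¹ • k i, fun j => ?_, ?_⟩
    · match j with
      | 0 => exact hknew
      | (i + 1) =>
        show B ((((i + 1 : ℕ)) : ℚ)⁻¹ • k i) = 0
        rw [Derivation.map_smul, hk, smul_zero]
    · rw [Finset.sum_range_succ']
      show c ^ (m + 1) * a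
        = (∑ x ∈ Finset.range N, (((x + 1 : ℕ)) : ℚ)⁻¹ • k x * s ^ (x + 1))
          + (c ^ (m + 1) * a - Q) * s ^ 0
      have h2 : ∑ i ∈ Finset.range N,
          (((i + 1 : ℕ) : ℚ))⁻¹ • k i * s ^ (i + 1) = Q := by
        rw [hQ]
        exact Finset.sum_congr rfl fun i _ => by rw [smul_mul_assoc]
      rw [h2]
      ring

end Slice

section Ident
variable {A : Type*} [CommRing A] [IsDomain A] [Algebra ℚ A]
variable (B B' : Derivation ℚ A A) (hB : IsLND ⇑B)
variable (hker : ∀ a : A, B a = 0 ↔ B' a = 0)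
variable {s c : A} (hsc : B s = c) (hc : B c = 0) (hc0 : c ≠ 0)

include hB hker hsc hc hc0 in
theorem propI (a : A) : B' s * B a = c * B' a := by
  obtain ⟨N, hN⟩ := hB a
  obtain ⟨m, k, hk, hT⟩ := taylor B hsc hc N a hN
  have hk' : ∀ i, B' (k i) = 0 := fun i => (hker _).mp (hk i)
  have hc' : B' c = 0 := (hker _).mp hc
  set S : A := ∑ i ∈ Finset.range N, i • (k i * s ^ (i - 1)) with hS
  have e1 : c ^ m * B a = c * S := by
    have := congrArg (⇑B) hT
    rw [Derivation.leibniz, deriv_pow_c B hc, smul_zero, add_zero, smul_eq_mul, map_sum] at this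
    rw [this, hS, Finset.mul_sum]
    refine Finset.sum_congr rfl fun i _ => ?_
    rw [Derivation.leibniz, hk, smul_zero, add_zero, smul_eq_mul, deriv_pow_s B hsc hc,
      nsmul_eq_mul, nsmul_eq_mul]
    ring
  have e2 : c ^ m * B' a = B' s * S := by
    have := congrArg (⇑B') hT
    rw [Derivation.leibniz, deriv_pow_c B' hc', smul_zero, add_zero, smul_eq_mul,
      map_sum] at this
    rw [this, hS, Finset.mul_sum]
    refine Finset.sum_congr rfl fun i _ => ?_
    rw [Derivation.leibniz, hk', smul_zero, add_zero, smul_eq_mul, Derivation.leibniz_pow,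
      smul_eq_mul, nsmul_eq_mul, nsmul_eq_mul]
    ring
  have key : c ^ m * (B' s * B a) = c ^ m * (c * B' a) := by
    calc c ^ m * (B' s * B a) = B' s * (c ^ m * B a) := by ring
    _ = B' s * (c * S) := by rw [e1]
    _ = c * (B' s * S) := by ring
    _ = c * (c ^ m * B' a) := by rw [e2]
    _ = c ^ m * (c * B' a) := by ring
  exact mul_left_cancel₀ (pow_ne_zero m hc0) key

include hB hker hsc hc hc0 in
theorem propII (hB' : IsLND ⇑B') : B (B' s) = 0 := by
  by_contra hBu
  have hu0 : B' s ≠ 0 := by rintro h; rw [h] at hBu; exact hBu (map_zero B)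
  have hnuc : lndNu B hB c = 0 + 1 :=
    lndNu_eq B hB (n := 0) (by simpa using hc) (by simpa using hc0)
  have ht : 2 ≤ lndNu B hB (B' s) := by
    rcases Nat.lt_or_ge (lndNu B hB (B' s)) 2 with hlt | hge
    · exact absurd (by simpa using iter_eq_zero_of_nu_le B hB (n := 1) (by omega)) hBu
    · exact hge
  have claim : ∀ n, 1 ≤ n → 2 ≤ lndNu B hB ((⇑B')^[n] s) := by
    intro n
    induction n with
    | zero => omega
    | succ n ih =>
      intro _
      rcases Nat.eq_zero_or_pos n with rfl | hn
      · simpa using ht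
      · have h2 := ih hn
        have hr0 : (⇑B')^[n] s ≠ 0 := by
          rintro h; rw [h] at h2
          have h3 := lndNu_le B hB (n := 0) (a := 0) rfl
          omega
        have hBr : B ((⇑B')^[n] s) ≠ 0 := by
          intro h
          have : lndNu B hB ((⇑B')^[n] s) ≤ 1 :=
            lndNu_le B hB (n := 1) (by simpa using h)
          omega
        have hrec : c * (⇑B')^[n+1] s = B' s * B ((⇑B')^[n] s) := by
          rw [Function.iterate_succ_apply']
          exact (propI B B' hB hker hsc hc hc0 _).symm
        have hne : (⇑B')^[n+1] s ≠ 0 := by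
          intro h
          rw [h, mul_zero] at hrec
          exact (mul_ne_zero hu0 hBr) hrec.symm
        have hnu1 : lndNu B hB (c * (⇑B')^[n+1] s) = lndNu B hB ((⇑B')^[n+1] s) := by
          rw [lndNu_mul B hB hc0 hne, hnuc]; omega
        have hnu2 : lndNu B hB (B' s * B ((⇑B')^[n] s))
            = lndNu B hB (B' s) + (lndNu B hB ((⇑B')^[n] s) - 1) - 1 := by
          rw [lndNu_mul B hB hu0 hBr, lndNu_deriv B hB hBr]
        rw [hrec, hnu2] at hnu1
        omega
  obtain ⟨n, hn⟩ := hB' s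
  rcases Nat.eq_zero_or_pos n with rfl | hn1
  · simp at hn
    rw [hn] at hu0
    exact hu0 (map_zero B')
  · have := claim n hn1
    rw [hn] at this
    have h3 := lndNu_le B hB (n := 0) (a := 0) rfl
    omega

include hB hker hsc hc hc0 in
theorem convBB' (hBu : B (B' s) = 0) (j : ℕ) (a : A) :
    c ^ j * (⇑B')^[j] a = (B' s) ^ j * (⇑B)^[j] a := by
  induction j generalizing a with
  | zero => simp
  | succ j ih =>
    have step : ∀ x : A, c ^ j * B ((⇑B')^[j] x) = (B' s) ^ j * (⇑B)^[j+1] x := by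
      intro x
      have := congrArg (⇑B) (ih x)
      rw [Derivation.leibniz, deriv_pow_c B hc, smul_zero, add_zero, smul_eq_mul,
        Derivation.leibniz, deriv_pow_c B hBu, smul_zero, add_zero, smul_eq_mul,
        ← Function.iterate_succ_apply' (⇑B) j x] at this
      exact this
    rw [Function.iterate_succ_apply', pow_succ, pow_succ]
    calc c ^ j * c * B' ((⇑B')^[j] a) = c ^ j * (c * B' ((⇑B')^[j] a)) := by ring
    _ = c ^ j * (B' s * B ((⇑B')^[j] a)) := by
        rw [propI B B' hB hker hsc hc hc0]
    _ = B' s * (c ^ j * B ((⇑B')^[j] a)) := by ring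
    _ = B' s * ((B' s) ^ j * (⇑B)^[j+1] a) := by rw [step]
    _ = B' s ^ j * B' s * (⇑B)^[j+1] a := by ring

end Ident

section Mgen
variable {A : Type*} [CommRing A] [IsDomain A] [Algebra ℚ A]
variable (B : Derivation ℚ A A) {s c : A} (hsc : B s = c) (hc : B c = 0) (hc0 : c ≠ 0)

theorem iter_sum (D : Derivation ℚ A A) (j : ℕ) (T : Finset ℕ) (f : ℕ → A) :
    (⇑D)^[j] (∑ i ∈ T, f i) = ∑ i ∈ T, (⇑D)^[j] (f i) := by
  induction T using Finset.cons_induction with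
  | empty => simp [iter_zero]
  | cons i T hi ih => rw [Finset.sum_cons, iter_add, ih, Finset.sum_cons]

theorem qsmul_fact_cancel (j : ℕ) (z : A) :
    ((j.factorial : ℚ))⁻¹ • (j.factorial • z) = z :=
  qsmul_nat_cancel j.factorial_ne_zero z

include hsc hc hc0 in
theorem mgen (ψ : A → A) (hadd : ∀ x y, ψ (x + y) = ψ x + ψ y)
    (hmul : ∀ x y, ψ (x * y) = ψ x * ψ y)
    (hfixψ : ∀ k : A, B k = 0 → ψ k = k) (E : A) (hψs : ψ s = s + E)
    (N : ℕ) (a : A) (h : (⇑B)^[N] a = 0) :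
    c ^ (N - 1) * ψ a
      = ∑ j ∈ Finset.range N,
          ((j.factorial : ℚ))⁻¹ • (c ^ (N - 1 - j) * E ^ j * (⇑B)^[j] a) := by
  have hψ0 : ψ 0 = 0 := by
    have h00 := hadd 0 0
    rw [add_zero] at h00
    have h01 : ψ 0 + ψ 0 = ψ 0 + 0 := by rw [add_zero]; exact h00.symm
    exact add_left_cancel h01
  have hψsum : ∀ (T : Finset ℕ) (f : ℕ → A), ψ (∑ i ∈ T, f i) = ∑ i ∈ T, ψ (f i) := by
    intro T f
    induction T using Finset.cons_induction with
    | empty => simpa using hψ0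
    | cons i T hi ih => rw [Finset.sum_cons, hadd, ih, Finset.sum_cons]
  have hψpow : ∀ (x : A) (n : ℕ), ψ (x ^ n) = ψ x ^ n := by
    intro x n
    induction n with
    | zero =>
      rw [pow_zero, pow_zero]
      exact hfixψ 1 (Derivation.map_one_eq_zero B)
    | succ n ih => rw [pow_succ, hmul, ih, pow_succ]
  obtain ⟨m, k, hk, hT⟩ := taylor B hsc hc N a h
  -- LHS * c^m
  have hL : c ^ m * (c ^ (N - 1) * ψ a)
      = ∑ i ∈ Finset.range N, k i * (s + E) ^ i * c ^ (N - 1) := by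
    have h1 : ψ (c ^ m * a) = c ^ m * ψ a := by
      rw [hmul, hfixψ (c ^ m) (deriv_pow_c B hc m)]
    have h2 : ψ (c ^ m * a) = ∑ i ∈ Finset.range N, k i * (s + E) ^ i := by
      rw [hT, hψsum]
      refine Finset.sum_congr rfl fun i _ => ?_
      rw [hmul, hψpow, hψs, hfixψ (k i) (hk i)]
    calc c ^ m * (c ^ (N - 1) * ψ a) = c ^ (N - 1) * (c ^ m * ψ a) := by ring
    _ = c ^ (N - 1) * ∑ i ∈ Finset.range N, k i * (s + E) ^ i := by rw [← h1, h2]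
    _ = ∑ i ∈ Finset.range N, k i * (s + E) ^ i * c ^ (N - 1) := by
        rw [Finset.mul_sum]; exact Finset.sum_congr rfl fun i _ => by ring
  -- RHS * c^m
  have hR : c ^ m * (∑ j ∈ Finset.range N,
        ((j.factorial : ℚ))⁻¹ • (c ^ (N - 1 - j) * E ^ j * (⇑B)^[j] a))
      = ∑ i ∈ Finset.range N, k i * (s + E) ^ i * c ^ (N - 1) := by
    have hBj : ∀ j, c ^ m * (⇑B)^[j] a
        = ∑ i ∈ Finset.range N, k i * (i.descFactorial j • (s ^ (i - j) * c ^ j)) := by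
      intro j
      rw [← iter_const_mul B (deriv_pow_c B hc m) j a, hT, iter_sum]
      refine Finset.sum_congr rfl fun i _ => ?_
      rw [iter_const_mul B (hk i), iter_pow_s B hsc hc]
    rw [Finset.mul_sum]
    have hterm : ∀ j ∈ Finset.range N,
        c ^ m * (((j.factorial : ℚ))⁻¹ • (c ^ (N - 1 - j) * E ^ j * (⇑B)^[j] a))
          = ∑ i ∈ Finset.range N,
              (i.choose j : A) * (k i * s ^ (i - j) * E ^ j) * c ^ (N - 1) := by
      intro j hj
      have hjN : j ≤ N - 1 := by rw [Finset.mem_range] at hj; omega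
      rw [mul_smul_comm]
      have : c ^ m * (c ^ (N - 1 - j) * E ^ j * (⇑B)^[j] a)
          = c ^ (N - 1 - j) * E ^ j * (c ^ m * (⇑B)^[j] a) := by ring
      rw [this, hBj j, Finset.mul_sum, Finset.smul_sum]
      refine Finset.sum_congr rfl fun i _ => ?_
      rw [Nat.descFactorial_eq_factorial_mul_choose, mul_comm (j.factorial) (i.choose j),
        mul_nsmul, mul_smul_comm, mul_smul_comm, qsmul_fact_cancel]
      rw [nsmul_eq_mul]
      have hcc : c ^ (N - 1 - j) * c ^ j = c ^ (N - 1) := by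
        rw [← pow_add]; congr 1; omega
      calc c ^ (N - 1 - j) * E ^ j * (k i * ((i.choose j : A) * (s ^ (i - j) * c ^ j)))
          = (i.choose j : A) * (k i * s ^ (i - j) * E ^ j) * (c ^ (N - 1 - j) * c ^ j) := by
            ring
      _ = (i.choose j : A) * (k i * s ^ (i - j) * E ^ j) * c ^ (N - 1) := by rw [hcc]
    rw [Finset.sum_congr rfl hterm, Finset.sum_comm]
    refine Finset.sum_congr rfl fun i hi => ?_
    rw [Finset.mem_range] at hi
    have hsub : Finset.range (i + 1) ⊆ Finset.range N := by
      intro x hx; rw [Finset.mem_range] at *; omega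
    rw [← Finset.sum_subset hsub (fun x _ hx => ?_)]
    · have := add_pow E s i
      calc ∑ j ∈ Finset.range (i + 1), (i.choose j : A) * (k i * s ^ (i - j) * E ^ j)
            * c ^ (N - 1)
          = (∑ j ∈ Finset.range (i + 1), E ^ j * s ^ (i - j) * (i.choose j : A))
            * (k i * c ^ (N - 1)) := by
            rw [Finset.sum_mul]; exact Finset.sum_congr rfl fun j _ => by ring
      _ = (E + s) ^ i * (k i * c ^ (N - 1)) := by rw [← this]
      _ = k i * (s + E) ^ i * c ^ (N - 1) := by rw [add_comm E s]; ring
    · rw [Finset.mem_range] at hx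
      have : i.choose x = 0 := Nat.choose_eq_zero_of_lt (by omega)
      rw [this, Nat.cast_zero, zero_mul, zero_mul]
  exact mul_left_cancel₀ (pow_ne_zero m hc0) (hL.trans hR.symm)

end Mgen

section Vander
variable {A : Type*} [CommRing A] [Algebra ℚ A]

noncomputable def mvQ {N : ℕ} (M : Matrix (Fin N) (Fin N) ℚ) (v : Fin N → A) : Fin N → A :=
  fun i => ∑ j, M i j • v j

theorem mvQ_mul {N : ℕ} (M M' : Matrix (Fin N) (Fin N) ℚ) (v : Fin N → A) :
    mvQ (M * M') v = mvQ M (mvQ M' v) := by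
  funext i
  simp only [mvQ, Matrix.mul_apply, Finset.sum_smul, Finset.smul_sum]
  rw [Finset.sum_comm]
  exact Finset.sum_congr rfl fun j _ => Finset.sum_congr rfl fun t _ => (smul_smul _ _ _).symm

theorem mvQ_one {N : ℕ} (v : Fin N → A) : mvQ 1 v = v := by
  funext i
  simp [mvQ, Matrix.one_apply]

theorem vander_solve {N : ℕ} (v w : Fin N → A)
    (hw : ∀ t : Fin N, w t = ∑ j : Fin N, ((t : ℕ) ^ (j : ℕ)) • v j) (i : Fin N) :
    ∃ q : Fin N → ℚ, v i = ∑ t, q t • w t := by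
  set V : Matrix (Fin N) (Fin N) ℚ := Matrix.vandermonde (fun t : Fin N => (t : ℚ)) with hV
  have hdet : IsUnit V.det := by
    rw [hV, Matrix.det_vandermonde]
    rw [isUnit_iff_ne_zero]
    rw [Finset.prod_ne_zero_iff]
    intro t _
    rw [Finset.prod_ne_zero_iff]
    intro r hr
    rw [Finset.mem_Ioi] at hr
    have : (t : ℕ) < (r : ℕ) := hr
    have hne : ((t : ℕ) : ℚ) ≠ ((r : ℕ) : ℚ) := by
      exact_mod_cast Nat.ne_of_lt this
    exact sub_ne_zero.mpr (Ne.symm hne)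
  have hwv : w = mvQ V v := by
    funext t
    rw [hw t]
    refine Finset.sum_congr rfl fun j _ => ?_
    rw [hV]
    show ((t : ℕ) ^ (j : ℕ)) • v j = ((t : ℚ) ^ (j : ℕ)) • v j
    rw [← Nat.cast_smul_eq_nsmul ℚ, Nat.cast_pow]
  have hv : v = mvQ V⁻¹ w := by
    rw [hwv, ← mvQ_mul, Matrix.nonsing_inv_mul V hdet, mvQ_one]
  exact ⟨fun t => V⁻¹ i t, by rw [hv]; rfl⟩

end Vander

section Quot
variable {A : Type*} [CommRing A] [IsDomain A] [Algebra ℚ A]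

theorem prime_not_dvd_all (B' : Derivation ℚ A A) (hB' : IsLND ⇑B')
    (hirr : IsIrreducibleLND B') {π : A} (hπ : Prime π) (hdvd : ∀ a, π ∣ B' a) : False := by
  classical
  have hπ0 : π ≠ 0 := hπ.ne_zero
  set g : A → A := fun a => Classical.choose (hdvd a) with hg
  have hspec : ∀ a, B' a = π * g a := fun a => Classical.choose_spec (hdvd a)
  have huniq : ∀ a w, B' a = π * w → g a = w := fun a w hw =>
    mul_left_cancel₀ hπ0 ((hspec a).symm.trans hw)
  set L : A →ₗ[ℚ] A :=
    { toFun := g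
      map_add' := fun x y => huniq _ _ (by rw [map_add, hspec x, hspec y]; ring)
      map_smul' := fun q x => huniq _ _ (by
        rw [Derivation.map_smul, hspec x, mul_smul_comm, RingHom.id_apply]) } with hL
  set D : Derivation ℚ A A :=
    { toLinearMap := L
      map_one_eq_zero' := huniq 1 0 (by rw [Derivation.map_one_eq_zero, mul_zero])
      leibniz' := fun x y => huniq _ _ (by
        rw [Derivation.leibniz, hspec x, hspec y, smul_eq_mul, smul_eq_mul, smul_eq_mul,
          smul_eq_mul, show L y = g y from rfl, show L x = g x from rfl]
        ring) } with hD
  have hDapp : ∀ a, D a = g a := fun a => rfl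
  have hiter : ∀ (n : ℕ) (a : A), π ^ n * (⇑D)^[n] a = (⇑B')^[n] a := by
    intro n
    induction n with
    | zero => intro a; simp
    | succ n ih =>
      intro a
      have hBπ : B' π = 0 := deriv_eq_zero_of_dvd B' hB' (hdvd π)
      rw [Function.iterate_succ_apply, Function.iterate_succ_apply, pow_succ]
      calc π ^ n * π * (⇑D)^[n] ((⇑D) a) = π * (π ^ n * (⇑D)^[n] (D a)) := by ring
      _ = π * (⇑B')^[n] (D a) := by rw [ih]
      _ = (⇑B')^[n] (π * D a) := (iter_const_mul B' hBπ n _).symm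
      _ = (⇑B')^[n] (B' a) := by rw [hDapp, ← hspec]
  have hDlnd : IsLND ⇑D := by
    intro a
    obtain ⟨n, hn⟩ := hB' a
    exact ⟨n, by
      have := hiter n a
      rw [hn] at this
      exact (mul_eq_zero.mp this).resolve_left (pow_ne_zero n hπ0)⟩
  have hDπ : D π = 0 := by
    rw [hDapp]
    exact huniq π 0 (by rw [deriv_eq_zero_of_dvd B' hB' (hdvd π), mul_zero])
  have hfac : B' = π • D := by
    ext a
    rw [Derivation.smul_apply, smul_eq_mul, hDapp, hspec]
  exact hπ.not_unit (hirr.2.2 π D hDlnd hDπ hfac)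

end Quot

section UFD
variable {A : Type*} [CommRing A] [IsDomain A] [UniqueFactorizationMonoid A] [Algebra ℚ A]

theorem dvd_of_dvd_mul_deriv (B' : Derivation ℚ A A) (hB'0 : B' ≠ 0) (hB' : IsLND ⇑B')
    (hirr : IsIrreducibleLND B') (u e : A) (he : ∀ a, u ∣ e * B' a) : u ∣ e := by
  induction u using UniqueFactorizationMonoid.induction_on_prime generalizing e with
  | h₁ =>
    obtain ⟨a0, ha0⟩ : ∃ a, B' a ≠ 0 := by
      by_contra hall
      push_neg at hall
      exact hB'0 (Derivation.ext fun a => by rw [hall a, Derivation.zero_apply])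
    have h1 : e * B' a0 = 0 := zero_dvd_iff.mp (he a0)
    rcases mul_eq_zero.mp h1 with h | h
    · rw [h]
    · exact absurd h ha0
  | h₂ x hx => exact hx.dvd
  | h₃ a p ha hp ih =>
    have hpe : p ∣ e := by
      by_contra hpe
      refine prime_not_dvd_all B' hB' hirr hp fun x => ?_
      have h1 : p ∣ e * B' x := dvd_trans (Dvd.intro a rfl) (he x)
      exact (hp.dvd_or_dvd h1).resolve_left hpe
    obtain ⟨e1, rfl⟩ := hpe
    have h2 : ∀ x, a ∣ e1 * B' x := by
      intro x
      have h1 := he x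
      rw [mul_assoc] at h1
      exact (mul_dvd_mul_iff_left hp.ne_zero).mp h1
    exact mul_dvd_mul_left p (ih e1 h2)

end UFD


end AutoExpAux

open AutoExpAux in
/-- Let `A` be a UFD containing `ℚ`, `B`, `B'` nonzero locally nilpotent
derivations with `B'` irreducible and `ker B = ker B'`, and `φ` a `ℚ`-algebra
automorphism of `A` fixing `ker B` pointwise and commuting with `B`.  Assume
there is `0 ≠ d ∈ ker B` such that the extension of `B` to `A_d` has a slice
(equivalently, `∃ s n, B s = d ^ n`).  Then `φ = exp(f B')` for some `f ∈ ker B`. -/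
theorem automorphism_fixing_ker_is_exp {A : Type*} [CommRing A] [IsDomain A]
    [UniqueFactorizationMonoid A] [Algebra ℚ A]
    (B B' : Derivation ℚ A A) (hB0 : B ≠ 0) (hB'0 : B' ≠ 0)
    (hB : IsLND ⇑B) (hB' : IsLND ⇑B')
    (hirr : IsIrreducibleLND B') (hker : ∀ a : A, B a = 0 ↔ B' a = 0)
    (φ : A ≃ₐ[ℚ] A) (hfix : ∀ a : A, B a = 0 → φ a = a)
    (hcomm : ∀ a : A, φ (B a) = B (φ a))
    (hslice : ∃ d : A, d ≠ 0 ∧ B d = 0 ∧ ∃ (s : A) (n : ℕ), B s = d ^ n) :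
    ∃ f : A, B f = 0 ∧ IsExp (fun a => f * B' a) ⇑φ := by
  classical
  obtain ⟨d, hd0, hdker, s, n, hs⟩ := hslice
  set c : A := d ^ n with hcdef
  have hc0 : c ≠ 0 := pow_ne_zero n hd0
  have hsc : B s = c := hs
  have hc : B c = 0 := deriv_pow_c B hdker n
  have hu : B (B' s) = 0 := propII B B' hB hker hsc hc hc0 hB'
  set u : A := B' s with hudef
  have hu' : B' u = 0 := (hker u).mp hu
  have hu0 : u ≠ 0 := by
    intro h
    exact hc0 (hsc ▸ ((hker s).mpr h))
  set e : A := φ s - s with hedef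
  have hBe : B e = 0 := by
    rw [hedef, map_sub, ← hcomm s, hsc, hfix c hc, sub_self]
  have hB'e : B' e = 0 := (hker e).mp hBe
  -- iterates of φ
  have hφfix : ∀ (t : ℕ) (x : A), B x = 0 → (⇑φ)^[t] x = x := by
    intro t
    induction t with
    | zero => intro x _; rfl
    | succ t ih =>
      intro x hx
      rw [Function.iterate_succ_apply, hfix x hx, ih x hx]
  have hφadd : ∀ (t : ℕ) (x y : A), (⇑φ)^[t] (x + y) = (⇑φ)^[t] x + (⇑φ)^[t] y := by
    intro t
    induction t with
    | zero => intro x y; rfl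
    | succ t ih =>
      intro x y
      rw [Function.iterate_succ_apply, map_add, ih, ← Function.iterate_succ_apply,
        ← Function.iterate_succ_apply]
  have hφmul : ∀ (t : ℕ) (x y : A), (⇑φ)^[t] (x * y) = (⇑φ)^[t] x * (⇑φ)^[t] y := by
    intro t
    induction t with
    | zero => intro x y; rfl
    | succ t ih =>
      intro x y
      rw [Function.iterate_succ_apply, map_mul, ih, ← Function.iterate_succ_apply,
        ← Function.iterate_succ_apply]
  have hφe : φ e = e := hfix e hBe
  have hφs : ∀ t : ℕ, (⇑φ)^[t] s = s + t • e := by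
    intro t
    induction t with
    | zero => simp
    | succ t ih =>
      rw [Function.iterate_succ_apply', ih, map_add, map_nsmul, hφe, succ_nsmul]
      have : φ s = s + e := by rw [hedef]; ring
      rw [this]
      ring
  have hMt : ∀ (t N : ℕ) (a : A), (⇑B)^[N] a = 0 →
      c ^ (N - 1) * (⇑φ)^[t] a
        = ∑ j ∈ Finset.range N,
            ((j.factorial : ℚ))⁻¹ • (c ^ (N - 1 - j) * (t • e) ^ j * (⇑B)^[j] a) :=
    fun t N a h =>
      mgen B hsc hc hc0 ((⇑φ)^[t]) (hφadd t) (hφmul t) (hφfix t) (t • e) (hφs t) N a h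
  have hconv := convBB' B B' hB hker hsc hc hc0 hu
  have hBvan : ∀ {N : ℕ} {a : A}, (⇑B')^[N] a = 0 → (⇑B)^[N] a = 0 := by
    intro N a h
    have := hconv N a
    rw [h, mul_zero] at this
    rcases mul_eq_zero.mp this.symm with h1 | h1
    · exact absurd h1 (pow_ne_zero N hu0)
    · exact h1
  have hMt' : ∀ (t N : ℕ) (a : A), (⇑B')^[N] a = 0 →
      u ^ (N - 1) * (⇑φ)^[t] a
        = ∑ j ∈ Finset.range N,
            ((j.factorial : ℚ))⁻¹ • (u ^ (N - 1 - j) * (t • e) ^ j * (⇑B')^[j] a) := by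
    intro t N a h
    refine mul_left_cancel₀ (pow_ne_zero (N - 1) hc0) ?_
    calc c ^ (N - 1) * (u ^ (N - 1) * (⇑φ)^[t] a)
        = u ^ (N - 1) * (c ^ (N - 1) * (⇑φ)^[t] a) := by ring
    _ = u ^ (N - 1) * ∑ j ∈ Finset.range N,
          ((j.factorial : ℚ))⁻¹ • (c ^ (N - 1 - j) * (t • e) ^ j * (⇑B)^[j] a) := by
        rw [hMt t N a (hBvan h)]
    _ = c ^ (N - 1) * ∑ j ∈ Finset.range N,
          ((j.factorial : ℚ))⁻¹ • (u ^ (N - 1 - j) * (t • e) ^ j * (⇑B')^[j] a) := by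
        rw [Finset.mul_sum, Finset.mul_sum]
        refine Finset.sum_congr rfl fun j hj => ?_
        rw [Finset.mem_range] at hj
        rw [mul_smul_comm, mul_smul_comm]
        congr 1
        symm
        have hcc : c ^ (N - 1) = c ^ (N - 1 - j) * c ^ j := by
          rw [← pow_add]; congr 1; omega
        have huu : u ^ (N - 1) = u ^ (N - 1 - j) * u ^ j := by
          rw [← pow_add]; congr 1; omega
        calc c ^ (N - 1) * (u ^ (N - 1 - j) * (t • e) ^ j * (⇑B')^[j] a)
            = u ^ (N - 1 - j) * (t • e) ^ j * (c ^ (N - 1 - j) * (c ^ j * (⇑B')^[j] a)) := by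
              rw [hcc]; ring
        _ = u ^ (N - 1 - j) * (t • e) ^ j * (c ^ (N - 1 - j) * (u ^ j * (⇑B)^[j] a)) := by
              rw [hconv j a]
        _ = u ^ (N - 1) * (c ^ (N - 1 - j) * (t • e) ^ j * (⇑B)^[j] a) := by
              rw [huu]; ring
  -- divisibility
  have hdvdall : ∀ a : A, u ∣ e * B' a := by
    intro a
    set N : ℕ := max (lndNu B' hB' a) 2 with hN
    have hN2 : 2 ≤ N := le_max_right _ _
    have hNa : (⇑B')^[N] a = 0 := iter_eq_zero_of_nu_le B' hB' (le_max_left _ _)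
    set v : Fin N → A := fun j =>
      (((j : ℕ).factorial : ℚ))⁻¹ • (u ^ (N - 1 - (j : ℕ)) * e ^ (j : ℕ) * (⇑B')^[(j : ℕ)] a)
      with hv
    set w : Fin N → A := fun t => u ^ (N - 1) * (⇑φ)^[(t : ℕ)] a with hw
    have hweq : ∀ t : Fin N, w t = ∑ j : Fin N, ((t : ℕ) ^ (j : ℕ)) • v j := by
      intro t
      rw [hw]
      show u ^ (N - 1) * (⇑φ)^[(t : ℕ)] a = _
      rw [hMt' (t : ℕ) N a hNa, ← Fin.sum_univ_eq_sum_range (fun j =>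
        ((j.factorial : ℚ))⁻¹ • (u ^ (N - 1 - j) * ((t : ℕ) • e) ^ j * (⇑B')^[j] a)) N]
      refine Finset.sum_congr rfl fun j _ => ?_
      have h1 : u ^ (N - 1 - (j : ℕ)) * ((t : ℕ) • e) ^ (j : ℕ) * (⇑B')^[(j : ℕ)] a
          = ((t : ℕ) ^ (j : ℕ)) • (u ^ (N - 1 - (j : ℕ)) * e ^ (j : ℕ)
            * (⇑B')^[(j : ℕ)] a) := by
        rw [nsmul_eq_mul, nsmul_eq_mul, mul_pow]
        push_cast
        ring
      rw [h1, smul_comm]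
    obtain ⟨q, hq⟩ := vander_solve v w hweq ⟨1, by omega⟩
    have hv1 : v ⟨1, by omega⟩ = u ^ (N - 2) * (e * B' a) := by
      rw [hv]
      show ((Nat.factorial 1 : ℕ) : ℚ)⁻¹ • (u ^ (N - 1 - 1) * e ^ 1 * (⇑B')^[1] a) = _
      rw [Nat.factorial_one, Nat.cast_one, inv_one, one_smul, pow_one,
        Function.iterate_one]
      have : N - 1 - 1 = N - 2 := by omega
      rw [this]
      ring
    have hfac : u ^ (N - 2) * (e * B' a) = u ^ (N - 1) * ∑ t, q t • (⇑φ)^[(t : ℕ)] a := by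
      rw [← hv1, hq, Finset.mul_sum]
      refine Finset.sum_congr rfl fun t _ => ?_
      rw [hw, mul_smul_comm]
    have hpow : u ^ (N - 1) = u ^ (N - 2) * u := by
      rw [← pow_succ]; congr 1; omega
    rw [hpow, mul_assoc] at hfac
    have := mul_left_cancel₀ (pow_ne_zero (N - 2) hu0) hfac
    exact Dvd.intro _ this.symm
  obtain ⟨f, hf⟩ := dvd_of_dvd_mul_deriv B' hB'0 hB' hirr u e hdvdall
  have hB'f : B' f = 0 := by
    have h1 : B' (u * f) = u * B' f := by
      rw [Derivation.leibniz, hu', smul_eq_mul, smul_eq_mul, mul_zero, add_zero]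
    rw [← hf, hB'e] at h1
    rcases mul_eq_zero.mp h1.symm with h | h
    · exact absurd h hu0
    · exact h
  have hBf : B f = 0 := (hker f).mpr hB'f
  refine ⟨f, hBf, ?_⟩
  intro a N hvan
  have hit : ∀ i, (fun x => f * B' x)^[i] a = f ^ i * (⇑B')^[i] a := by
    intro i
    induction i with
    | zero => simp
    | succ i ih =>
      rw [Function.iterate_succ_apply', ih, Function.iterate_succ_apply']
      show f * B' (f ^ i * (⇑B')^[i] a) = _
      rw [Derivation.leibniz, deriv_pow_c B' hB'f i, smul_eq_mul, smul_eq_mul, mul_zero,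
        add_zero, pow_succ]
      ring
  set M : ℕ := max N (lndNu B' hB' a) with hM
  have hMa : (⇑B')^[M] a = 0 := iter_eq_zero_of_nu_le B' hB' (le_max_right _ _)
  have hmain := hMt' 1 M a hMa
  rw [Function.iterate_one, one_nsmul] at hmain
  have hmain2 : u ^ (M - 1) * φ a
      = u ^ (M - 1) * ∑ j ∈ Finset.range M,
          ((j.factorial : ℚ))⁻¹ • (f ^ j * (⇑B')^[j] a) := by
    rw [hmain, Finset.mul_sum]
    refine Finset.sum_congr rfl fun j hj => ?_
    rw [Finset.mem_range] at hj
    rw [mul_smul_comm]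
    congr 1
    have huu : u ^ (M - 1) = u ^ (M - 1 - j) * u ^ j := by
      rw [← pow_add]; congr 1; omega
    rw [hf, mul_pow, huu]
    ring
  have hφa : φ a = ∑ j ∈ Finset.range M,
      ((j.factorial : ℚ))⁻¹ • (f ^ j * (⇑B')^[j] a) :=
    mul_left_cancel₀ (pow_ne_zero (M - 1) hu0) hmain2
  rw [hφa]
  rw [← Finset.sum_subset (Finset.range_subset_range.mpr (le_max_left N (lndNu B' hB' a)))
    (fun j _ hj => ?_)]
  · refine Finset.sum_congr rfl fun j _ => ?_
    rw [hit j]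
  · rw [Finset.mem_range, not_lt] at hj
    have := hvan j hj
    rw [hit j] at this
    rw [this, smul_zero]
end

section
/- Let T be a torus with dim T > 0 and G = T ⋉ (A ⋉ A[P]) with A = ℂ[z], where the product on A ⋉ A[P] is (h,f)·(h̄,f̄) = (h+h̄, f(P−h̄a')+f̄) for a fixed nonzero a' ∈ ℂ[z]. Assume: A[P] ⊆ G is normal; conjugation of T on A[P] is λ⁻¹fλ = μ(λ) f(ρ₁(λ)z, ρ₂(λ)P) for characters μ, ρ₁, ρ₂ with ker ρ₁ ∩ ker ρ₂ = {1}; the conjugation action of T on G/A[P] is nontrivial; and (λ,0,0)·(1,h,f) = (λ,h,f). Then A[P] equals the centralizer in G of the second derived subgroup G^{(2)}. -/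
open Polynomial Multiplicative
open scoped commutatorElement

noncomputable def scaleZ (c : ℂ) : Polynomial ℂ →+* Polynomial ℂ :=
  (Polynomial.aeval (Polynomial.C c * Polynomial.X) :
    Polynomial ℂ →ₐ[ℂ] Polynomial ℂ).toRingHom

noncomputable def torusAct (m r1 r2 : ℂ) (f : Polynomial (Polynomial ℂ)) :
    Polynomial (Polynomial ℂ) :=
  Polynomial.C (Polynomial.C m) *
    ((f.map (scaleZ r1)).comp (Polynomial.C (Polynomial.C r2) * Polynomial.X))

lemma scaleZ_C (r a : ℂ) : scaleZ r (C a) = C a := by simp [scaleZ]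
lemma scaleZ_X (r : ℂ) : scaleZ r X = C r * X := by simp [scaleZ]
lemma scaleZ_one (p : Polynomial ℂ) : scaleZ 1 p = p := by simp [scaleZ]

lemma torusAct_C (m r1 r2 : ℂ) (q : Polynomial ℂ) :
    torusAct m r1 r2 (C q) = C (C m * scaleZ r1 q) := by simp [torusAct]
lemma torusAct_X (m r1 r2 : ℂ) :
    torusAct m r1 r2 (X : Polynomial (Polynomial ℂ)) = C (C (m * r2)) * X := by
  simp [torusAct]; ring
lemma torusAct_sub (m r1 r2 : ℂ) (f g : Polynomial (Polynomial ℂ)) :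
    torusAct m r1 r2 (f - g) = torusAct m r1 r2 f - torusAct m r1 r2 g := by
  simp [torusAct, Polynomial.map_sub, sub_comp, mul_sub]
lemma torusAct_CmulX (m r1 r2 : ℂ) (q : Polynomial ℂ) :
    torusAct m r1 r2 (C q * X) = C (C (m * r2) * scaleZ r1 q) * X := by
  simp [torusAct]; ring
lemma torusAct_add (m r1 r2 : ℂ) (f g : Polynomial (Polynomial ℂ)) :
    torusAct m r1 r2 (f + g) = torusAct m r1 r2 f + torusAct m r1 r2 g := by
  simp [torusAct, Polynomial.map_add, add_comp, mul_add]

lemma ext1 (m r1 r2 m' r1' r2' ms r1s r2s : ℂ) (u v : Polynomial ℂ)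
    (hc : torusAct m r1 r2 ((torusAct m' r1' r2' (C (C 1))).comp (X - C u))
        = (torusAct ms r1s r2s (C (C 1))).comp (X - C v)) :
    m * m' = ms := by
  rw [torusAct_C, C_comp, torusAct_C, torusAct_C, C_comp] at hc
  simp only [scaleZ_C, scaleZ_X, map_mul, map_one, mul_assoc] at hc
  have h2 := congrArg (fun p => (p.coeff 0).coeff 0) hc
  simp [coeff_C_mul, coeff_X_one, coeff_C] at h2
  linear_combination h2

lemma ext2 (m r1 r2 m' r1' r2' ms r1s r2s : ℂ) (u v : Polynomial ℂ)
    (hc : torusAct m r1 r2 ((torusAct m' r1' r2' (C X)).comp (X - C u))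
        = (torusAct ms r1s r2s (C X)).comp (X - C v)) :
    (m * m') * (r1 * r1') = ms * r1s := by
  rw [torusAct_C, C_comp, torusAct_C, torusAct_C, C_comp] at hc
  simp only [scaleZ_C, scaleZ_X, map_mul, mul_assoc] at hc
  have h2 := congrArg (fun p => (p.coeff 0).coeff 1) hc
  simp [coeff_C_mul, coeff_X_one, coeff_C] at h2
  linear_combination h2

lemma ext3 (m r1 r2 m' r1' r2' ms r1s r2s : ℂ) (u v : Polynomial ℂ)
    (hc : torusAct m r1 r2 ((torusAct m' r1' r2' X).comp (X - C u))
        = (torusAct ms r1s r2s X).comp (X - C v)) :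
    (m * m') * (r2 * r2') = ms * r2s := by
  rw [torusAct_X, torusAct_X, mul_comp, C_comp, X_comp, mul_sub, mul_comp, C_comp, X_comp,
    mul_sub] at hc
  simp only [← C_mul] at hc
  rw [torusAct_sub, torusAct_CmulX, torusAct_C] at hc
  simp only [scaleZ_C, scaleZ_X, map_mul, mul_assoc] at hc
  have h2 := congrArg (fun p => (p.coeff 1).coeff 0) hc
  simp [coeff_C_mul, coeff_X_one, coeff_C, coeff_sub] at h2
  linear_combination h2

lemma extA (m r1 r2 : ℂ) (c u : Polynomial ℂ)
    (hc : (torusAct m r1 r2 (C c)).comp (X - C u) = C c) :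
    C m * scaleZ r1 c = c := by
  rw [torusAct_C, C_comp, C_inj] at hc
  exact hc

lemma extB1 (m r1 r2 : ℂ) (p e u : Polynomial ℂ)
    (hc : (torusAct m r1 r2 (C p * X + C e)).comp (X - C u) = C p * X + C e) :
    C m * C r2 * scaleZ r1 p = p := by
  rw [torusAct_add, torusAct_CmulX, torusAct_C, add_comp, mul_comp, C_comp, X_comp, C_comp] at hc
  have h2 := congrArg (fun q => q.coeff 1) hc
  simp [coeff_add, coeff_sub, mul_sub, coeff_C_mul, coeff_X_one, coeff_C] at h2
  linear_combination h2

lemma extB0 (m r1 r2 : ℂ) (p e u : Polynomial ℂ)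
    (hc : (torusAct m r1 r2 (C p * X + C e)).comp (X - C u) = C p * X + C e) :
    C m * scaleZ r1 e - C m * C r2 * scaleZ r1 p * u = e := by
  rw [torusAct_add, torusAct_CmulX, torusAct_C, add_comp, mul_comp, C_comp, X_comp, C_comp] at hc
  have h2 := congrArg (fun q => q.coeff 0) hc
  simp [coeff_add, coeff_sub, mul_sub, coeff_C_mul, coeff_X_zero, coeff_C] at h2
  linear_combination h2

lemma DD_sq (h h0 b : Polynomial ℂ) :
    ((((X : Polynomial (Polynomial ℂ)) ^ 2).comp (X + C (h * b)) - X ^ 2).comp (X + C (h0 * b))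
      - (((X : Polynomial (Polynomial ℂ)) ^ 2).comp (X + C (h * b)) - X ^ 2))
      = C (2 * h * h0 * b ^ 2) := by
  simp only [sub_comp, pow_comp, add_comp, mul_comp, X_comp, C_comp, map_mul, C_mul, map_pow,
    C_pow, map_ofNat]
  ring

lemma DD_cube (h h0 b : Polynomial ℂ) :
    ((((X : Polynomial (Polynomial ℂ)) ^ 3).comp (X + C (h * b)) - X ^ 3).comp (X + C (h0 * b))
      - (((X : Polynomial (Polynomial ℂ)) ^ 3).comp (X + C (h * b)) - X ^ 3))
      = C (6 * h * h0 * b ^ 2) * X + C (3 * h * h0 ^ 2 * b ^ 3 + 3 * h ^ 2 * h0 * b ^ 3) := by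
  simp only [sub_comp, pow_comp, add_comp, mul_comp, X_comp, C_comp, map_mul, C_mul, map_pow,
    C_pow, map_ofNat, map_add, C_add]
  ring

/-- (Lemma on the presentation of `G = T ⋉ (A ⋉ A[P])`, `A = ℂ[z]`.)
Let `T = (ℂ*)ⁿ` with `n ≥ 1` be a torus and let `G` be a group which is the
semidirect product `T ⋉ (A ⋉ A[P])`: every element of `G` is uniquely
`ι(λ)·j(h)·k(f)`, the product on `A ⋉ A[P]` is
`(h,f)·(h̄,f̄) = (h+h̄, f(P−h̄a')+f̄)` for a fixed `0 ≠ a' ∈ ℂ[z]`, the subgroup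
`A[P] = range k` is normal, conjugation of `T` on `A[P]` is
`λ⁻¹ f λ = μ(λ)·f(ρ₁(λ)z, ρ₂(λ)P)` for characters `μ, ρ₁, ρ₂` with
`ker ρ₁ ∩ ker ρ₂ = 1`, and the conjugation action of `T` on `G/A[P]` is
nontrivial.  Then `A[P]` is the centralizer in `G` of the second derived
subgroup `G⁽²⁾`. -/
theorem aP_eq_centralizer_second_derived
    {G : Type*} [Group G] (n : ℕ) (hn : 0 < n)
    (a' : Polynomial ℂ) (ha' : a' ≠ 0)
    (ι : (Fin n → ℂˣ) →* G)
    (j : Multiplicative (Polynomial ℂ) →* G)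
    (k : Multiplicative (Polynomial (Polynomial ℂ)) →* G)
    (μ ρ₁ ρ₂ : (Fin n → ℂˣ) →* ℂˣ)
    (hbij : Function.Bijective
      (fun t : (Fin n → ℂˣ) × Polynomial ℂ × Polynomial (Polynomial ℂ) =>
        ι t.1 * j (Multiplicative.ofAdd t.2.1) * k (Multiplicative.ofAdd t.2.2)))
    (hnorm : (MonoidHom.range k).Normal)
    (hconjA : ∀ (h : Polynomial ℂ) (f : Polynomial (Polynomial ℂ)),
      (j (Multiplicative.ofAdd h))⁻¹ * k (Multiplicative.ofAdd f) * j (Multiplicative.ofAdd h)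
        = k (Multiplicative.ofAdd (f.comp (X - C (h * a')))))
    (hconjT : ∀ (lam : Fin n → ℂˣ) (f : Polynomial (Polynomial ℂ)),
      (ι lam)⁻¹ * k (Multiplicative.ofAdd f) * ι lam
        = k (Multiplicative.ofAdd (torusAct (μ lam : ℂ) (ρ₁ lam : ℂ) (ρ₂ lam : ℂ) f)))
    (hker : ∀ lam : Fin n → ℂˣ, ρ₁ lam = 1 → ρ₂ lam = 1 → lam = 1)
    (hnontriv : ∃ (lam : Fin n → ℂˣ) (g : G),
      (ι lam)⁻¹ * g * ι lam * g⁻¹ ∉ MonoidHom.range k) :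
    MonoidHom.range k =
      Subgroup.centralizer
        (↑(⁅(⁅(⊤ : Subgroup G), (⊤ : Subgroup G)⁆ : Subgroup G),
           (⁅(⊤ : Subgroup G), (⊤ : Subgroup G)⁆ : Subgroup G)⁆ : Subgroup G) : Set G) := by
  haveI := hnorm
  have huniq : ∀ (l l' : Fin n → ℂˣ) (h h' : Polynomial ℂ) (f f' : Polynomial (Polynomial ℂ)),
      ι l * j (ofAdd h) * k (ofAdd f) = ι l' * j (ofAdd h') * k (ofAdd f') →
      l = l' ∧ h = h' ∧ f = f' := by
    intro l l' h h' f f' hE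
    have h2 := hbij.injective (a₁ := (l, h, f)) (a₂ := (l', h', f')) hE
    refine ⟨congrArg Prod.fst h2, ?_, ?_⟩
    · exact congrArg (fun t => t.2.1) h2
    · exact congrArg (fun t => t.2.2) h2
  have kinj : ∀ f f' : Polynomial (Polynomial ℂ), k (ofAdd f) = k (ofAdd f') → f = f' := by
    intro f f' hE
    refine (huniq 1 1 0 0 f f' ?_).2.2
    rw [hE]
  have kcomm : ∀ f f' : Multiplicative (Polynomial (Polynomial ℂ)),
      k f * k f' = k f' * k f := by
    intro f f'; rw [← map_mul, ← map_mul, mul_comm]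
  have R1 : ∀ (lam : Fin n → ℂˣ) (f : Polynomial (Polynomial ℂ)),
      k (ofAdd f) * ι lam
        = ι lam * k (ofAdd (torusAct (μ lam : ℂ) (ρ₁ lam : ℂ) (ρ₂ lam : ℂ) f)) := by
    intro lam f
    have h1 : k (ofAdd f) * ι lam = ι lam * ((ι lam)⁻¹ * k (ofAdd f) * ι lam) := by group
    rw [h1, hconjT]
  have R1' : ∀ (lam : Fin n → ℂˣ) (f : Polynomial (Polynomial ℂ)),
      k (ofAdd f) * (ι lam)⁻¹
        = (ι lam)⁻¹ * k (ofAdd (torusAct (μ lam⁻¹ : ℂ) (ρ₁ lam⁻¹ : ℂ) (ρ₂ lam⁻¹ : ℂ) f)) := by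
    intro lam f
    rw [← map_inv]; exact R1 lam⁻¹ f
  have R2 : ∀ (h : Polynomial ℂ) (f : Polynomial (Polynomial ℂ)),
      k (ofAdd f) * j (ofAdd h)
        = j (ofAdd h) * k (ofAdd (f.comp (X - C (h * a')))) := by
    intro h f
    have h1 : k (ofAdd f) * j (ofAdd h)
        = j (ofAdd h) * ((j (ofAdd h))⁻¹ * k (ofAdd f) * j (ofAdd h)) := by group
    rw [h1, hconjA]
  have push : ∀ (lam : Fin n → ℂˣ) (hh : Polynomial ℂ) (ff fw : Polynomial (Polynomial ℂ)),
      k (ofAdd fw) * (ι lam * j (ofAdd hh) * k (ofAdd ff))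
        = (ι lam * j (ofAdd hh) * k (ofAdd ff)) *
          k (ofAdd ((torusAct (μ lam : ℂ) (ρ₁ lam : ℂ) (ρ₂ lam : ℂ) fw).comp
            (X - C (hh * a')))) := by
    intro lam hh ff fw
    have s1 := R1 lam fw
    have s2 := R2 hh (torusAct (μ lam : ℂ) (ρ₁ lam : ℂ) (ρ₂ lam : ℂ) fw)
    have s3 := kcomm (ofAdd ((torusAct (μ lam : ℂ) (ρ₁ lam : ℂ) (ρ₂ lam : ℂ) fw).comp
      (X - C (hh * a')))) (ofAdd ff)
    calc k (ofAdd fw) * (ι lam * j (ofAdd hh) * k (ofAdd ff))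
        = (k (ofAdd fw) * ι lam) * (j (ofAdd hh) * k (ofAdd ff)) := by group
      _ = ι lam * (k (ofAdd (torusAct (μ lam : ℂ) (ρ₁ lam : ℂ) (ρ₂ lam : ℂ) fw)) *
            j (ofAdd hh)) * k (ofAdd ff) := by rw [s1]; group
      _ = ι lam * (j (ofAdd hh) *
            k (ofAdd ((torusAct (μ lam : ℂ) (ρ₁ lam : ℂ) (ρ₂ lam : ℂ) fw).comp
              (X - C (hh * a'))))) * k (ofAdd ff) := by rw [s2]
      _ = ι lam * j (ofAdd hh) *
            (k (ofAdd ((torusAct (μ lam : ℂ) (ρ₁ lam : ℂ) (ρ₂ lam : ℂ) fw).comp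
              (X - C (hh * a')))) * k (ofAdd ff)) := by group
      _ = ι lam * j (ofAdd hh) * (k (ofAdd ff) *
            k (ofAdd ((torusAct (μ lam : ℂ) (ρ₁ lam : ℂ) (ρ₂ lam : ℂ) fw).comp
              (X - C (hh * a'))))) := by rw [s3]
      _ = ι lam * j (ofAdd hh) * k (ofAdd ff) *
            k (ofAdd ((torusAct (μ lam : ℂ) (ρ₁ lam : ℂ) (ρ₂ lam : ℂ) fw).comp
              (X - C (hh * a')))) := by group
  set N : Subgroup G :=
    { carrier := {g | ∃ h f, g = j (ofAdd h) * k (ofAdd f)}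
      one_mem' := ⟨0, 0, by simp⟩
      mul_mem' := by
        rintro x y ⟨h1, f1, rfl⟩ ⟨h2, f2, rfl⟩
        refine ⟨h1 + h2, f1.comp (X - C (h2 * a')) + f2, ?_⟩
        have e1 : j (ofAdd h1) * k (ofAdd f1) * (j (ofAdd h2) * k (ofAdd f2))
            = j (ofAdd h1) * (k (ofAdd f1) * j (ofAdd h2)) * k (ofAdd f2) := by group
        rw [e1, R2, ofAdd_add, ofAdd_add, map_mul, map_mul, map_mul]
        group
      inv_mem' := by
        rintro x ⟨h, f, rfl⟩
        refine ⟨-h, (-f).comp (X - C (-h * a')), ?_⟩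
        have e1 : (k (ofAdd f))⁻¹ = k (ofAdd (-f)) := by rw [ofAdd_neg, map_inv]
        have e2 : (j (ofAdd h))⁻¹ = j (ofAdd (-h)) := by rw [ofAdd_neg, map_inv]
        rw [mul_inv_rev, e1, e2, R2] } with hN
  have hkN : ∀ f, k (ofAdd f) ∈ N := fun f => ⟨0, f, by simp⟩
  have keyN : ∀ (lam : Fin n → ℂˣ) (h : Polynomial ℂ),
      ((ι lam)⁻¹ * j (ofAdd h) * ι lam) ∈ N := by
    intro lam h
    obtain ⟨⟨σ, h', f'⟩, hc⟩ := hbij.surjective ((ι lam)⁻¹ * j (ofAdd h) * ι lam)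
    dsimp only at hc
    have E12 : ∀ f : Polynomial (Polynomial ℂ),
        torusAct (μ lam : ℂ) (ρ₁ lam : ℂ) (ρ₂ lam : ℂ)
            ((torusAct (μ lam⁻¹ : ℂ) (ρ₁ lam⁻¹ : ℂ) (ρ₂ lam⁻¹ : ℂ) f).comp (X - C (h * a')))
          = (torusAct (μ σ : ℂ) (ρ₁ σ : ℂ) (ρ₂ σ : ℂ) f).comp (X - C (h' * a')) := by
      intro f
      have s1 := R1' lam f
      have s2 := R2 h (torusAct (μ lam⁻¹ : ℂ) (ρ₁ lam⁻¹ : ℂ) (ρ₂ lam⁻¹ : ℂ) f)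
      have s3 := R1 lam ((torusAct (μ lam⁻¹ : ℂ) (ρ₁ lam⁻¹ : ℂ) (ρ₂ lam⁻¹ : ℂ) f).comp
        (X - C (h * a')))
      have e1 : k (ofAdd f) * ((ι lam)⁻¹ * j (ofAdd h) * ι lam)
          = ((ι lam)⁻¹ * j (ofAdd h) * ι lam) *
            k (ofAdd (torusAct (μ lam : ℂ) (ρ₁ lam : ℂ) (ρ₂ lam : ℂ)
              ((torusAct (μ lam⁻¹ : ℂ) (ρ₁ lam⁻¹ : ℂ) (ρ₂ lam⁻¹ : ℂ) f).comp
                (X - C (h * a'))))) := by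
        calc k (ofAdd f) * ((ι lam)⁻¹ * j (ofAdd h) * ι lam)
            = (k (ofAdd f) * (ι lam)⁻¹) * (j (ofAdd h) * ι lam) := by group
          _ = (ι lam)⁻¹ *
                (k (ofAdd (torusAct (μ lam⁻¹ : ℂ) (ρ₁ lam⁻¹ : ℂ) (ρ₂ lam⁻¹ : ℂ) f)) *
                  j (ofAdd h)) * ι lam := by rw [s1]; group
          _ = (ι lam)⁻¹ * j (ofAdd h) *
                (k (ofAdd ((torusAct (μ lam⁻¹ : ℂ) (ρ₁ lam⁻¹ : ℂ) (ρ₂ lam⁻¹ : ℂ) f).comp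
                  (X - C (h * a')))) * ι lam) := by rw [s2]; group
          _ = (ι lam)⁻¹ * j (ofAdd h) * ι lam *
                k (ofAdd (torusAct (μ lam : ℂ) (ρ₁ lam : ℂ) (ρ₂ lam : ℂ)
                  ((torusAct (μ lam⁻¹ : ℂ) (ρ₁ lam⁻¹ : ℂ) (ρ₂ lam⁻¹ : ℂ) f).comp
                    (X - C (h * a'))))) := by rw [s3]; group
      have e2 : k (ofAdd f) * ((ι lam)⁻¹ * j (ofAdd h) * ι lam)
          = ((ι lam)⁻¹ * j (ofAdd h) * ι lam) *
            k (ofAdd ((torusAct (μ σ : ℂ) (ρ₁ σ : ℂ) (ρ₂ σ : ℂ) f).comp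
              (X - C (h' * a')))) := by
        rw [← hc]; exact push σ h' f' f
      exact kinj _ _ (mul_left_cancel (e1.symm.trans e2))
    have hmm : (μ lam : ℂ) * (μ lam⁻¹ : ℂ) = 1 := by
      rw [← Units.val_mul, ← map_mul]; simp
    have hr1r1 : (ρ₁ lam : ℂ) * (ρ₁ lam⁻¹ : ℂ) = 1 := by
      rw [← Units.val_mul, ← map_mul]; simp
    have hr2r2 : (ρ₂ lam : ℂ) * (ρ₂ lam⁻¹ : ℂ) = 1 := by
      rw [← Units.val_mul, ← map_mul]; simp
    have hμσ : (μ σ : ℂ) = 1 := by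
      have h2 := ext1 _ _ _ _ _ _ _ _ _ _ _ (E12 (C (C 1)))
      rw [← h2]; exact hmm
    have hρ₁σ : (ρ₁ σ : ℂ) = 1 := by
      have h2 := ext2 _ _ _ _ _ _ _ _ _ _ _ (E12 (C X))
      rw [hmm, hr1r1, one_mul, hμσ, one_mul] at h2
      exact h2.symm
    have hρ₂σ : (ρ₂ σ : ℂ) = 1 := by
      have h2 := ext3 _ _ _ _ _ _ _ _ _ _ _ (E12 X)
      rw [hmm, hr2r2, one_mul, hμσ, one_mul] at h2
      exact h2.symm
    have hσ : σ = 1 := hker σ (Units.ext (by simpa using hρ₁σ)) (Units.ext (by simpa using hρ₂σ))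
    rw [hσ, map_one, one_mul] at hc
    exact ⟨h', f', hc.symm⟩
  haveI hNnorm : N.Normal := by
    constructor
    intro x hx g
    obtain ⟨⟨lam, hg, fg⟩, rfl⟩ := hbij.surjective g
    dsimp only
    have hw : j (ofAdd hg) * k (ofAdd fg) ∈ N := ⟨hg, fg, rfl⟩
    have hstep : ∀ m' ∈ N, ι lam * m' * (ι lam)⁻¹ ∈ N := by
      rintro m' ⟨h, f, rfl⟩
      have e : ι lam * (j (ofAdd h) * k (ofAdd f)) * (ι lam)⁻¹
          = ((ι lam⁻¹)⁻¹ * j (ofAdd h) * (ι lam⁻¹)) *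
            ((ι lam⁻¹)⁻¹ * k (ofAdd f) * (ι lam⁻¹)) := by
        rw [map_inv]; group
      rw [e, hconjT]
      exact N.mul_mem (keyN lam⁻¹ h) (hkN _)
    have e2 : ι lam * j (ofAdd hg) * k (ofAdd fg) * x *
          (ι lam * j (ofAdd hg) * k (ofAdd fg))⁻¹
        = ι lam * ((j (ofAdd hg) * k (ofAdd fg)) * x * (j (ofAdd hg) * k (ofAdd fg))⁻¹) *
          (ι lam)⁻¹ := by group
    rw [e2]
    exact hstep _ (N.mul_mem (N.mul_mem hw hx) (N.inv_mem hw))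
  have hG1N : ∀ g1 g2 : G, ⁅g1, g2⁆ ∈ N := by
    intro g1 g2
    have hmk : ∀ g : G, ∃ lam, (QuotientGroup.mk' N) g = (QuotientGroup.mk' N) (ι lam) := by
      intro g
      obtain ⟨⟨lam, hg, fg⟩, rfl⟩ := hbij.surjective g
      dsimp only
      refine ⟨lam, ?_⟩
      rw [mul_assoc, map_mul]
      have h1 : (QuotientGroup.mk' N) (j (ofAdd hg) * k (ofAdd fg)) = 1 := by
        rw [QuotientGroup.mk'_apply, QuotientGroup.eq_one_iff]
        exact ⟨hg, fg, rfl⟩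
      rw [h1, mul_one]
    obtain ⟨l1, hl1⟩ := hmk g1
    obtain ⟨l2, hl2⟩ := hmk g2
    have h1 : (QuotientGroup.mk' N) ⁅g1, g2⁆ = 1 := by
      rw [map_commutatorElement, hl1, hl2, commutatorElement_eq_one_iff_commute]
      show _ * _ = _ * _
      rw [← map_mul, ← map_mul ι, mul_comm l1 l2, map_mul ι, map_mul]
    rwa [QuotientGroup.mk'_apply, QuotientGroup.eq_one_iff] at h1
  have G1le : (⁅(⊤ : Subgroup G), (⊤ : Subgroup G)⁆ : Subgroup G) ≤ N :=
    Subgroup.commutator_le.mpr fun g1 _ g2 _ => hG1N g1 g2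
  have hNNk : ∀ n1 ∈ N, ∀ n2 ∈ N, ⁅n1, n2⁆ ∈ MonoidHom.range k := by
    rintro n1 ⟨h1, f1, rfl⟩ n2 ⟨h2, f2, rfl⟩
    have hjk : ∀ (h : Polynomial ℂ) (f : Polynomial (Polynomial ℂ)),
        (QuotientGroup.mk' (MonoidHom.range k)) (j (ofAdd h) * k (ofAdd f))
          = (QuotientGroup.mk' (MonoidHom.range k)) (j (ofAdd h)) := by
      intro h f
      rw [map_mul]
      have h1 : (QuotientGroup.mk' (MonoidHom.range k)) (k (ofAdd f)) = 1 := by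
        rw [QuotientGroup.mk'_apply, QuotientGroup.eq_one_iff]
        exact ⟨ofAdd f, rfl⟩
      rw [h1, mul_one]
    have h1 : (QuotientGroup.mk' (MonoidHom.range k)) ⁅j (ofAdd h1) * k (ofAdd f1),
        j (ofAdd h2) * k (ofAdd f2)⁆ = 1 := by
      rw [map_commutatorElement, hjk, hjk, commutatorElement_eq_one_iff_commute]
      show _ * _ = _ * _
      rw [← map_mul, ← map_mul j, mul_comm (ofAdd h1), map_mul j, map_mul]
    rwa [QuotientGroup.mk'_apply, QuotientGroup.eq_one_iff] at h1
  have G2le : (⁅(⁅(⊤ : Subgroup G), (⊤ : Subgroup G)⁆ : Subgroup G),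
      (⁅(⊤ : Subgroup G), (⊤ : Subgroup G)⁆ : Subgroup G)⁆ : Subgroup G) ≤ MonoidHom.range k :=
    Subgroup.commutator_le.mpr fun g1 h1 g2 h2 => hNNk g1 (G1le h1) g2 (G1le h2)
  apply le_antisymm
  · rintro x ⟨f, rfl⟩
    rw [Subgroup.mem_centralizer_iff]
    rintro g hg
    obtain ⟨f2, rfl⟩ := G2le hg
    rw [← map_mul, ← map_mul, mul_comm]
  · intro x hx
    obtain ⟨⟨lam, hb, fb⟩, hxd⟩ := hbij.surjective x
    dsimp only at hxd
    obtain ⟨lam0, g0, hy⟩ := hnontriv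
    set y := (ι lam0)⁻¹ * g0 * ι lam0 * g0⁻¹ with hydef
    have hyG1 : y ∈ (⁅(⊤ : Subgroup G), (⊤ : Subgroup G)⁆ : Subgroup G) := by
      have h1 : y = ⁅(ι lam0)⁻¹, g0⁆ := by rw [commutatorElement_def, inv_inv]
      rw [h1]
      exact Subgroup.commutator_mem_commutator (Subgroup.mem_top _) (Subgroup.mem_top _)
    obtain ⟨h0, f0, hy0⟩ := G1le hyG1
    have h0ne : h0 ≠ 0 := by
      rintro rfl
      exact hy ⟨ofAdd f0, by rw [hy0]; simp⟩
    have kD : ∀ (h : Polynomial ℂ) (f : Polynomial (Polynomial ℂ)),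
        k (ofAdd (f.comp (X + C (h * a')) - f))
          ∈ (⁅(⊤ : Subgroup G), (⊤ : Subgroup G)⁆ : Subgroup G) := by
      intro h f
      have hcmp : X - C (-h * a') = X + C (h * a') := by
        rw [neg_mul, map_neg, sub_neg_eq_add]
      have hjc : j (ofAdd h) * k (ofAdd f) * (j (ofAdd h))⁻¹
          = k (ofAdd (f.comp (X + C (h * a')))) := by
        have h1 := hconjA (-h) f
        rw [ofAdd_neg, map_inv, inv_inv, hcmp] at h1
        rw [← h1]
      have he : ⁅j (ofAdd h), k (ofAdd f)⁆ = k (ofAdd (f.comp (X + C (h * a')) - f)) := by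
        rw [commutatorElement_def, hjc, ← map_inv, ← ofAdd_neg, ← map_mul, ← ofAdd_add,
          sub_eq_add_neg]
      rw [← he]
      exact Subgroup.commutator_mem_commutator (Subgroup.mem_top _) (Subgroup.mem_top _)
    have kD2 : ∀ (h : Polynomial ℂ) (f : Polynomial (Polynomial ℂ)),
        k (ofAdd ((f.comp (X + C (h * a')) - f).comp (X + C (h0 * a'))
            - (f.comp (X + C (h * a')) - f)))
          ∈ (⁅(⁅(⊤ : Subgroup G), (⊤ : Subgroup G)⁆ : Subgroup G),
             (⁅(⊤ : Subgroup G), (⊤ : Subgroup G)⁆ : Subgroup G)⁆ : Subgroup G) := by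
      intro h f
      have hcmp : X - C (-h0 * a') = X + C (h0 * a') := by
        rw [neg_mul, map_neg, sub_neg_eq_add]
      have hjc : ∀ w : Polynomial (Polynomial ℂ),
          j (ofAdd h0) * k (ofAdd w) * (j (ofAdd h0))⁻¹
            = k (ofAdd (w.comp (X + C (h0 * a')))) := by
        intro w
        have h1 := hconjA (-h0) w
        rw [ofAdd_neg, map_inv, inv_inv, hcmp] at h1
        rw [← h1]
      have hyk : ⁅y, k (ofAdd (f.comp (X + C (h * a')) - f))⁆
          = k (ofAdd ((f.comp (X + C (h * a')) - f).comp (X + C (h0 * a'))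
              - (f.comp (X + C (h * a')) - f))) := by
        set w := f.comp (X + C (h * a')) - f with hwdef
        rw [commutatorElement_def, hy0]
        have h1 : j (ofAdd h0) * k (ofAdd f0) * k (ofAdd w) * (j (ofAdd h0) * k (ofAdd f0))⁻¹
            = j (ofAdd h0) * k (ofAdd w) * (j (ofAdd h0))⁻¹ := by
          rw [mul_inv_rev]
          have h2 : k (ofAdd f0) * k (ofAdd w) = k (ofAdd w) * k (ofAdd f0) := kcomm _ _
          calc j (ofAdd h0) * k (ofAdd f0) * k (ofAdd w) * ((k (ofAdd f0))⁻¹ * (j (ofAdd h0))⁻¹)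
              = j (ofAdd h0) * (k (ofAdd f0) * k (ofAdd w)) * (k (ofAdd f0))⁻¹ *
                  (j (ofAdd h0))⁻¹ := by group
            _ = j (ofAdd h0) * (k (ofAdd w) * k (ofAdd f0)) * (k (ofAdd f0))⁻¹ *
                  (j (ofAdd h0))⁻¹ := by rw [h2]
            _ = j (ofAdd h0) * k (ofAdd w) * (j (ofAdd h0))⁻¹ := by group
        rw [h1, hjc, ← map_inv, ← ofAdd_neg, ← map_mul, ← ofAdd_add, sub_eq_add_neg]
      rw [← hyk]
      exact Subgroup.commutator_mem_commutator hyG1 (kD h f)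
    have main : ∀ (h : Polynomial ℂ) (f : Polynomial (Polynomial ℂ)),
        (torusAct (μ lam : ℂ) (ρ₁ lam : ℂ) (ρ₂ lam : ℂ)
            ((f.comp (X + C (h * a')) - f).comp (X + C (h0 * a'))
              - (f.comp (X + C (h * a')) - f))).comp (X - C (hb * a'))
          = (f.comp (X + C (h * a')) - f).comp (X + C (h0 * a'))
              - (f.comp (X + C (h * a')) - f) := by
      intro h f
      have hcent := Subgroup.mem_centralizer_iff.mp hx _ (kD2 h f)
      have e1 := push lam hb fb ((f.comp (X + C (h * a')) - f).comp (X + C (h0 * a'))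
        - (f.comp (X + C (h * a')) - f))
      rw [hxd, hcent] at e1
      exact (kinj _ _ (mul_left_cancel e1)).symm
    -- scalar extraction
    have hCne : (2 * h0 * a' ^ 2 : Polynomial ℂ) ≠ 0 :=
      mul_ne_zero (mul_ne_zero two_ne_zero h0ne) (pow_ne_zero 2 ha')
    have mainA : ∀ h : Polynomial ℂ,
        C ((μ lam : ℂ)) * scaleZ (ρ₁ lam : ℂ) (2 * h * h0 * a' ^ 2) = 2 * h * h0 * a' ^ 2 := by
      intro h
      have hm := main h (X ^ 2)
      rw [DD_sq h h0 a'] at hm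
      exact extA _ _ _ _ _ hm
    have e1 : C ((μ lam : ℂ)) * scaleZ (ρ₁ lam : ℂ) (2 * h0 * a' ^ 2) = 2 * h0 * a' ^ 2 := by
      have h1 := mainA 1
      rw [show (2 : Polynomial ℂ) * 1 * h0 * a' ^ 2 = 2 * h0 * a' ^ 2 by ring] at h1
      exact h1
    have hMne : (C ((μ lam : ℂ)) : Polynomial ℂ) ≠ 0 := by
      simpa using Units.ne_zero (μ lam)
    have hsne : scaleZ (ρ₁ lam : ℂ) (2 * h0 * a' ^ 2) ≠ 0 := by
      intro h1
      rw [h1, mul_zero] at e1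
      exact hCne e1.symm
    have hr1 : (ρ₁ lam : ℂ) = 1 := by
      have hX := mainA X
      rw [show (2 : Polynomial ℂ) * X * h0 * a' ^ 2 = X * (2 * h0 * a' ^ 2) by ring,
        map_mul, scaleZ_X] at hX
      have e3 : C ((ρ₁ lam : ℂ)) * (C ((μ lam : ℂ)) * X * scaleZ (ρ₁ lam : ℂ) (2 * h0 * a' ^ 2))
          = 1 * (C ((μ lam : ℂ)) * X * scaleZ (ρ₁ lam : ℂ) (2 * h0 * a' ^ 2)) := by
        rw [one_mul]
        calc C ((ρ₁ lam : ℂ)) * (C ((μ lam : ℂ)) * X * scaleZ (ρ₁ lam : ℂ) (2 * h0 * a' ^ 2))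
            = C ((μ lam : ℂ)) * (C ((ρ₁ lam : ℂ)) * X * scaleZ (ρ₁ lam : ℂ) (2 * h0 * a' ^ 2))
              := by ring
          _ = X * (2 * h0 * a' ^ 2) := hX
          _ = X * (C ((μ lam : ℂ)) * scaleZ (ρ₁ lam : ℂ) (2 * h0 * a' ^ 2)) := by rw [e1]
          _ = C ((μ lam : ℂ)) * X * scaleZ (ρ₁ lam : ℂ) (2 * h0 * a' ^ 2) := by ring
      have e4 := mul_right_cancel₀
        (mul_ne_zero (mul_ne_zero hMne X_ne_zero) hsne) e3
      rwa [← C_1, C_inj] at e4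
    have hm1 : (μ lam : ℂ) = 1 := by
      rw [hr1, scaleZ_one] at e1
      have e3 : C ((μ lam : ℂ)) * (2 * h0 * a' ^ 2) = 1 * (2 * h0 * a' ^ 2) := by
        rw [one_mul]; exact e1
      have e4 := mul_right_cancel₀ hCne e3
      rwa [← C_1, C_inj] at e4
    have h6ne : (6 * 1 * h0 * a' ^ 2 : Polynomial ℂ) ≠ 0 := by
      rw [show (6 : Polynomial ℂ) * 1 * h0 * a' ^ 2 = 6 * h0 * a' ^ 2 by ring]
      exact mul_ne_zero (mul_ne_zero (by norm_num) h0ne) (pow_ne_zero 2 ha')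
    have hm3 := main 1 (X ^ 3)
    rw [DD_cube 1 h0 a'] at hm3
    have hr2 : (ρ₂ lam : ℂ) = 1 := by
      have hp := extB1 _ _ _ _ _ _ hm3
      rw [hm1, hr1, scaleZ_one, C_1, one_mul] at hp
      have e3 : C ((ρ₂ lam : ℂ)) * (6 * 1 * h0 * a' ^ 2) = 1 * (6 * 1 * h0 * a' ^ 2) := by
        rw [one_mul]; exact hp
      have e4 := mul_right_cancel₀ h6ne e3
      rwa [← C_1, C_inj] at e4
    have hb0 : hb = 0 := by
      have hp := extB0 _ _ _ _ _ _ hm3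
      rw [hm1, hr1, hr2, scaleZ_one, scaleZ_one, C_1, one_mul, one_mul, one_mul] at hp
      have e3 : (6 * 1 * h0 * a' ^ 2 : Polynomial ℂ) * (hb * a') = 0 := by
        linear_combination -hp
      rcases mul_eq_zero.mp e3 with h1 | h1
      · exact absurd h1 h6ne
      · rcases mul_eq_zero.mp h1 with h2 | h2
        · exact h2
        · exact absurd h2 ha'
    have hlam : lam = 1 :=
      hker lam (Units.ext (by simpa using hr1)) (Units.ext (by simpa using hr2))
    refine ⟨ofAdd fb, ?_⟩
    rw [← hxd, hlam, hb0, map_one, ofAdd_zero, map_one, one_mul, one_mul]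
end
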